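/- arXiv:2111.02065 — 4 statements merged into one kernel-verified Lean document; each statement's English description precedes it below -/
import Mathlib

section
/- Let n, m be odd positive integers and G a graph with maximum degree Δ(G) ≤ m+n−2. Then G admits a red/blue edge coloring with no red copy of K_{1,n} and no blue copy of K_{1,m}. -/
open SimpleGraph

/-- The subgraph of `G` consisting of edges with color `b` under the 2-coloring `c`. -/
def colorSub {α : Type*} (G : SimpleGraph α) (c : Sym2 α → Bool) (b : Bool) :
    SimpleGraph α where
  Adj x y := G.Adj x y ∧ c s(x, y) = b
  symm := ⟨fun x y ⟨h1, h2⟩ => ⟨h1.symm, by rwa [Sym2.eq_swap]⟩⟩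
  loopless := ⟨fun x ⟨h, _⟩ => G.loopless.irrefl x h⟩

/-- `G` contains a copy of `H` (as a not necessarily induced subgraph). -/
def Contains {α β : Type*} (G : SimpleGraph α) (H : SimpleGraph β) : Prop :=
  ∃ f : β ↪ α, ∀ ⦃a b : β⦄, H.Adj a b → G.Adj (f a) (f b)

/-- `G → (F₁, F₂)`: every red/blue edge coloring of `G` yields a red `F₁` or a blue `F₂`. -/
def Arrows {α β γ : Type*} (G : SimpleGraph α) (F₁ : SimpleGraph β) (F₂ : SimpleGraph γ) :
    Prop :=
  ∀ c : Sym2 α → Bool,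
    Contains (colorSub G c true) F₁ ∨ Contains (colorSub G c false) F₂

/-- The star `K_{1,n}` with center `0` and `n` leaves. -/
def starG (n : ℕ) : SimpleGraph (Fin (n + 1)) where
  Adj i j := i ≠ j ∧ (i = 0 ∨ j = 0)
  symm := ⟨fun i j ⟨h1, h2⟩ => ⟨h1.symm, h2.symm⟩⟩
  loopless := ⟨fun i ⟨h, _⟩ => h rfl⟩

/-- The star forest `⊔_{j} K_{1, m j}`, with `j`-th component a star with center `⟨j, 0⟩`
and `m j` leaves. -/
def starForest (t : ℕ) (m : Fin t → ℕ) :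
    SimpleGraph (Σ j : Fin t, Fin (m j + 1)) where
  Adj x y := x.1 = y.1 ∧ x.2.val ≠ y.2.val ∧ (x.2.val = 0 ∨ y.2.val = 0)
  symm := ⟨fun x y ⟨h1, h2, h3⟩ => ⟨h1.symm, h2.symm, h3.symm⟩⟩
  loopless := ⟨fun x ⟨_, h, _⟩ => h rfl⟩

/-- The size Ramsey number `r̂(F₁, F₂)`: the minimum number of edges of a (finite) graph
`G` with `G → (F₁, F₂)`. -/
noncomputable def sizeRamsey {β γ : Type*} (F₁ : SimpleGraph β) (F₂ : SimpleGraph γ) : ℕ :=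
  sInf {N : ℕ | ∃ (V : Type) (_ : Fintype V) (G : SimpleGraph V),
    G.edgeSet.ncard = N ∧ Arrows G F₁ F₂}


set_option linter.unusedSectionVars false
set_option linter.unusedVariables false
set_option maxHeartbeats 1000000

namespace StarRamsey
open Finset

section Orientation
variable {V : Type} [Fintype V] [DecidableEq V] (G : SimpleGraph V) [DecidableRel G.Adj]

def Hflip (o : V → V → Bool) : Prop := ∀ v w : V, v ≠ w → o v w = !o w v

def outd (o : V → V → Bool) (v : V) : ℕ :=
  (Finset.univ.filter (fun w => G.Adj v w ∧ o v w = true)).card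

def ind (o : V → V → Bool) (v : V) : ℕ :=
  (Finset.univ.filter (fun w => G.Adj v w ∧ o w v = true)).card

lemma outd_add_ind {o : V → V → Bool} (h : Hflip o) (v : V) :
    outd G o v + ind G o v = G.degree v := by
  classical
  have hdeg : G.degree v = (Finset.univ.filter (fun w => G.Adj v w)).card := by
    rw [← card_neighborFinset_eq_degree]
    congr 1
    ext w
    simp [mem_neighborFinset]
  have h1 : (Finset.univ.filter (fun w => G.Adj v w ∧ o v w = true))
      = (Finset.univ.filter (fun w => G.Adj v w)).filter (fun w => o v w = true) := by
    rw [filter_filter]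
  have h2 : (Finset.univ.filter (fun w => G.Adj v w ∧ o w v = true))
      = (Finset.univ.filter (fun w => G.Adj v w)).filter (fun w => ¬ (o v w = true)) := by
    rw [filter_filter]
    apply filter_congr
    intro w _
    by_cases hadj : G.Adj v w
    · have hf := h v w hadj.ne
      revert hf
      cases hvw : o v w <;> cases hwv : o w v <;> simp_all
    · simp [hadj]
  rw [outd, ind, h1, h2, hdeg]
  exact card_filter_add_card_filter_not _

def rev (o : V → V → Bool) (x y : V) : V → V → Bool := fun a b =>
  if a = x ∧ b = y then false else if a = y ∧ b = x then true else o a b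

lemma hflip_rev {o : V → V → Bool} (h : Hflip o) {x y : V} (hxy : x ≠ y) :
    Hflip (rev o x y) := by
  intro v w hvw
  unfold rev
  by_cases h1 : v = x ∧ w = y
  · obtain ⟨rfl, rfl⟩ := h1
    simp [hxy, hxy.symm]
  · by_cases h2 : v = y ∧ w = x
    · obtain ⟨rfl, rfl⟩ := h2
      simp [hxy, hxy.symm]
    · have h3 : ¬ (w = x ∧ v = y) := fun ⟨ha, hb⟩ => h2 ⟨hb, ha⟩
      have h4 : ¬ (w = y ∧ v = x) := fun ⟨ha, hb⟩ => h1 ⟨hb, ha⟩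
      simp only [if_neg h1, if_neg h2, if_neg h3, if_neg h4]
      exact h v w hvw

lemma outd_rev_fst {o : V → V → Bool} {x y : V} (hadj : G.Adj x y) (ho : o x y = true) :
    outd G (rev o x y) x + 1 = outd G o x := by
  have hxy : x ≠ y := hadj.ne
  have hset : (Finset.univ.filter (fun w => G.Adj x w ∧ rev o x y x w = true))
      = (Finset.univ.filter (fun w => G.Adj x w ∧ o x w = true)).erase y := by
    ext b
    simp only [mem_erase, mem_filter, mem_univ, true_and, rev]
    by_cases hb : b = y
    · subst hb
      simp [hxy]
    · simp [hb, hxy]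

  have hy : y ∈ (Finset.univ.filter (fun w => G.Adj x w ∧ o x w = true)) := by
    simp [hadj, ho]
  rw [outd, outd, hset, card_erase_add_one hy]

lemma outd_rev_snd {o : V → V → Bool} (h : Hflip o) {x y : V} (hadj : G.Adj x y)
    (ho : o x y = true) : outd G (rev o x y) y = outd G o y + 1 := by
  have hxy : x ≠ y := hadj.ne
  have hoyx : o y x = false := by
    have hf := h x y hxy
    revert hf
    cases hyx : o y x <;> simp_all
  have hset : (Finset.univ.filter (fun w => G.Adj y w ∧ rev o x y y w = true))
      = insert x (Finset.univ.filter (fun w => G.Adj y w ∧ o y w = true)) := by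
    ext b
    simp only [mem_insert, mem_filter, mem_univ, true_and, rev]
    by_cases hb : b = x
    · subst hb
      simp [hxy.symm, hadj.symm]
    · simp [hb, hxy.symm]

  have hx : x ∉ (Finset.univ.filter (fun w => G.Adj y w ∧ o y w = true)) := by
    simp [hoyx]
  rw [outd, outd, hset, card_insert_of_notMem hx]

lemma outd_rev_other {o : V → V → Bool} {x y z : V} (hzx : z ≠ x) (hzy : z ≠ y) :
    outd G (rev o x y) z = outd G o z := by
  unfold outd
  congr 1
  apply filter_congr
  intro b _
  unfold rev
  rw [if_neg (fun hh : z = x ∧ b = y => hzx hh.1), if_neg (fun hh : z = y ∧ b = x => hzy hh.1)]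


lemma rev_darts {o : V → V → Bool} {x y : V} {u : V} (hux : u ≠ x) (huy : u ≠ y) (b : V) :
    rev o x y u b = o u b := by
  unfold rev
  rw [if_neg (fun hh : u = x ∧ b = y => hux hh.1), if_neg (fun hh : u = y ∧ b = x => huy hh.1)]

lemma rev_path {x u : V} (P : G.Walk x u) :
    ∀ o : V → V → Bool, Hflip o → P.IsPath → x ≠ u →
    (∀ d ∈ P.darts, o d.toProd.1 d.toProd.2 = true) →
    ∃ o', Hflip o' ∧ (outd G o' x + 1 = outd G o x) ∧ (outd G o' u = outd G o u + 1) ∧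
      ∀ z, z ≠ x → z ≠ u → outd G o' z = outd G o z := by
  induction P with
  | nil => intro o _ _ hxu _; exact absurd rfl hxu
  | @cons x y u hadj P ih =>
    intro o hflip hpath hxu hdarts
    have hfirst : o x y = true := by
      exact hdarts ⟨(x, y), hadj⟩ (by rw [Walk.darts_cons]; exact List.mem_cons_self)
    by_cases hyu : y = u
    · subst hyu
      exact ⟨rev o x y, hflip_rev hflip hadj.ne, outd_rev_fst G hadj hfirst,
        outd_rev_snd G hflip hadj hfirst, fun z hzx hzy => outd_rev_other G hzx hzy⟩
    · have hxsupp : x ∉ P.support := by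
        have := hpath.support_nodup
        rw [Walk.support_cons] at this
        exact (List.nodup_cons.mp this).1
      have hdarts' : ∀ d ∈ P.darts, (rev o x y) d.toProd.1 d.toProd.2 = true := by
        intro d hd
        have hfst : d.toProd.1 ∈ P.support := Walk.dart_fst_mem_support_of_mem_darts _ hd
        have hne_x : d.toProd.1 ≠ x := fun hh => hxsupp (hh ▸ hfst)
        by_cases hne_y : d.toProd.1 = y
        · unfold rev
          rw [if_neg (fun hh : d.toProd.1 = x ∧ d.toProd.2 = y => hne_x hh.1)]
          by_cases hbx : d.toProd.1 = y ∧ d.toProd.2 = x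
          · rw [if_pos hbx]
          · rw [if_neg hbx]
            exact hdarts d (by simp [Walk.darts_cons, hd])
        · rw [rev_darts hne_x hne_y]
          exact hdarts d (by simp [Walk.darts_cons, hd])
      obtain ⟨o2, ho2flip, ho2y, ho2u, ho2z⟩ :=
        ih (rev o x y) (hflip_rev hflip hadj.ne) hpath.of_cons hyu hdarts'
      have hxy := hadj.ne
      refine ⟨o2, ho2flip, ?_, ?_, ?_⟩
      · have h1 : outd G o2 x = outd G (rev o x y) x := ho2z x hxy hxu
        rw [h1]
        exact outd_rev_fst G hadj hfirst
      · rw [ho2u, outd_rev_other G (Ne.symm hxu) (Ne.symm hyu)]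
      · intro z hzx hzu
        by_cases hzy : z = y
        · subst hzy
          have h2 := outd_rev_snd G hflip hadj hfirst
          omega
        · rw [ho2z z hzy hzu, outd_rev_other G hzx hzy]

lemma exists_deficient {o : V → V → Bool} (hf : Hflip o) {v0 : V}
    (h : G.degree v0 < 2 * outd G o v0) :
    ∃ u, Relation.ReflTransGen (fun a b => G.Adj a b ∧ o a b = true) v0 u ∧
      2 * outd G o u < G.degree u := by
  classical
  by_contra hc
  push_neg at hc
  set r := fun a b => G.Adj a b ∧ o a b = true with hr
  set S := Finset.univ.filter (fun x => Relation.ReflTransGen r v0 x) with hS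
  have hv0 : v0 ∈ S := by simp only [hS, mem_filter, mem_univ, true_and]; exact Relation.ReflTransGen.refl
  have hclosed : ∀ x ∈ S, ∀ w, G.Adj x w → o x w = true → w ∈ S := by
    intro x hx w hadj how
    simp only [hS, mem_filter, mem_univ, true_and] at hx ⊢
    exact hx.tail ⟨hadj, how⟩
  -- sum of outdegrees over S equals pairs within S
  have hout : ∑ x ∈ S, outd G o x
      = ∑ x ∈ S, ∑ w ∈ S, (if G.Adj x w ∧ o x w = true then 1 else 0) := by
    apply Finset.sum_congr rfl
    intro x hx
    rw [outd, Finset.card_filter]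
    symm
    apply Finset.sum_subset (Finset.subset_univ S)
    intro w _ hw
    by_cases hcond : G.Adj x w ∧ o x w = true
    · exact absurd (hclosed x hx w hcond.1 hcond.2) hw
    · simp [hcond]
  have hin : ∑ x ∈ S, ∑ w ∈ S, (if G.Adj x w ∧ o w x = true then 1 else 0)
      ≤ ∑ x ∈ S, ind G o x := by
    apply Finset.sum_le_sum
    intro x _
    rw [ind, Finset.card_filter]
    apply Finset.sum_le_sum_of_subset (Finset.subset_univ S)
  have hswap : ∑ x ∈ S, ∑ w ∈ S, (if G.Adj x w ∧ o x w = true then 1 else 0)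
      = ∑ x ∈ S, ∑ w ∈ S, (if G.Adj x w ∧ o w x = true then 1 else 0) := by
    rw [Finset.sum_comm]
    apply Finset.sum_congr rfl
    intro x _
    apply Finset.sum_congr rfl
    intro w _
    congr 1
    simp only [eq_iff_iff]
    constructor
    · rintro ⟨h1, h2⟩; exact ⟨h1.symm, h2⟩
    · rintro ⟨h1, h2⟩; exact ⟨h1.symm, h2⟩
  have hle : ∑ x ∈ S, outd G o x ≤ ∑ x ∈ S, ind G o x := by
    rw [hout, hswap]; exact hin
  have hpt : ∀ x ∈ S, ind G o x ≤ outd G o x := by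
    intro x hx
    simp only [hS, mem_filter, mem_univ, true_and] at hx
    have h1 := hc x hx
    have h2 := outd_add_ind G hf x
    omega
  have hstrict : ind G o v0 < outd G o v0 := by
    have h2 := outd_add_ind G hf v0
    omega
  have := Finset.sum_lt_sum hpt ⟨v0, hv0, hstrict⟩
  omega

lemma walk_of_rtg {o : V → V → Bool} {v0 u : V}
    (h : Relation.ReflTransGen (fun a b => G.Adj a b ∧ o a b = true) v0 u) :
    ∃ P : G.Walk v0 u, ∀ d ∈ P.darts, o d.toProd.1 d.toProd.2 = true := by
  induction h with
  | refl => exact ⟨Walk.nil, by simp⟩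
  | @tail b c _ hbc ih =>
    obtain ⟨P, hP⟩ := ih
    refine ⟨P.concat hbc.1, ?_⟩
    intro d hd
    rw [Walk.darts_concat, List.concat_eq_append, List.mem_append] at hd
    rcases hd with hd | hd
    · exact hP d hd
    · simp only [List.mem_singleton] at hd
      subst hd
      exact hbc.2

def Phi (o : V → V → Bool) : ℕ := ∑ v, ((2 * (outd G o v : ℤ)) - G.degree v).natAbs

lemma improve {o : V → V → Bool} (hf : Hflip o) {v0 : V}
    (h : G.degree v0 + 2 ≤ 2 * outd G o v0) :
    ∃ o', Hflip o' ∧ Phi G o' < Phi G o := by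
  classical
  obtain ⟨u, hrtg, hu⟩ := exists_deficient G hf (v0 := v0) (by omega)
  have hv0u : v0 ≠ u := by
    intro hh
    rw [hh] at h
    omega
  obtain ⟨P, hP⟩ := walk_of_rtg G hrtg
  have hbd : ∀ d ∈ P.bypass.darts, o d.toProd.1 d.toProd.2 = true := fun d hd =>
    hP d (Walk.darts_bypass_subset P hd)
  obtain ⟨o', ho'f, h1, h2, h3⟩ := rev_path G P.bypass o hf (Walk.bypass_isPath P) hv0u hbd
  refine ⟨o', ho'f, ?_⟩
  unfold Phi
  apply Finset.sum_lt_sum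
  · intro z _
    by_cases hz1 : z = v0
    · subst hz1
      omega
    · by_cases hz2 : z = u
      · subst hz2
        omega
      · rw [h3 z hz1 hz2]
  · refine ⟨v0, Finset.mem_univ _, ?_⟩
    omega

lemma exists_balanced :
    ∃ o : V → V → Bool, Hflip o ∧
      ∀ v, 2 * outd G o v ≤ G.degree v + 1 ∧ G.degree v ≤ 2 * outd G o v + 1 := by
  classical
  have hne : ((Finset.univ : Finset (V → V → Bool)).filter (fun o => Hflip o)).Nonempty := by
    classical
    let e := (Fintype.equivFin V)
    refine ⟨fun v w => decide (e v < e w), ?_⟩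
    simp only [mem_filter, mem_univ, true_and]
    intro v w hvw
    have : e v ≠ e w := fun hh => hvw (e.injective hh)
    rcases lt_or_gt_of_ne this with h' | h'
    · simp [h', not_lt_of_gt h']
    · simp [h', not_lt_of_gt h']
  obtain ⟨o, ho, hmin⟩ := Finset.exists_min_image _ (Phi G) hne
  simp only [mem_filter, mem_univ, true_and] at ho
  refine ⟨o, ho, ?_⟩
  intro v
  by_contra hcon
  push_neg at hcon
  -- either 2*outd ≥ deg + 2 or deg ≥ 2*outd + 2
  have hcase : G.degree v + 2 ≤ 2 * outd G o v ∨ 2 * outd G o v + 2 ≤ G.degree v := by omega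
  have himp : ∃ o', Hflip o' ∧ Phi G o' < Phi G o := by
    rcases hcase with hc | hc
    · exact improve G ho hc
    · -- transpose
      set oT : V → V → Bool := fun a b => o b a with hoT
      have hfT : Hflip oT := by
        intro a b hab
        have := ho b a (Ne.symm hab)
        simp only [hoT]
        rw [this]
      have houtT : ∀ z, outd G oT z = ind G o z := by
        intro z
        unfold outd ind
        rfl
      have hPhiT : Phi G oT = Phi G o := by
        unfold Phi
        apply Finset.sum_congr rfl
        intro z _
        rw [houtT z]
        have := outd_add_ind G ho z
        omega
      have hvT : G.degree v + 2 ≤ 2 * outd G oT v := by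
        rw [houtT v]
        have := outd_add_ind G ho v
        omega
      obtain ⟨o', h1, h2⟩ := improve G hfT hvT
      exact ⟨o', h1, by omega⟩
  obtain ⟨o', h1, h2⟩ := himp
  have := hmin o' (by simp only [mem_filter, mem_univ, true_and]; exact h1)
  omega

end Orientation

def kstep {V W : Type} (R : V → W → Prop) (C : V → W → ℕ) (i j : ℕ) :
    (V ⊕ W) → (V ⊕ W) → Prop
  | Sum.inl v, Sum.inr w => R v w ∧ (C v w = i ∨ C v w = j)
  | Sum.inr w, Sum.inl v => R v w ∧ (C v w = i ∨ C v w = j)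
  | Sum.inl _, Sum.inl _ => False
  | Sum.inr _, Sum.inr _ => False

lemma kempe_no_reach {V W : Type} [Fintype V] [Fintype W] [DecidableEq V] [DecidableEq W]
    (R : V → W → Prop) [∀ v w, Decidable (R v w)] (C : V → W → ℕ)
    (properL : ∀ v w w', R v w → R v w' → C v w = C v w' → w = w')
    (properR : ∀ v v' w, R v w → R v' w → C v w = C v' w → v = v')
    (i j : ℕ) (hij : i ≠ j) (v0 : V) (w0 : W)
    (hi : ∀ w, R v0 w → C v0 w ≠ i)
    (hj : ∀ v, R v w0 → C v w0 ≠ j) :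
    ¬ Relation.ReflTransGen (kstep R C i j) (Sum.inl v0) (Sum.inr w0) := by
  classical
  intro hreach
  set c : ℕ → ℕ := fun t => if t % 2 = 0 then j else i with hc
  set next : ℕ → (V ⊕ W) → Option (V ⊕ W) := fun t => Sum.elim
    (fun v => if h : (Finset.univ.filter (fun w => R v w ∧ C v w = c t)).Nonempty
        then some (Sum.inr h.choose) else none)
    (fun w => if h : (Finset.univ.filter (fun v => R v w ∧ C v w = c t)).Nonempty
        then some (Sum.inl h.choose) else none)
    with hnext
  set tr : ℕ → Option (V ⊕ W) :=
    fun t => Nat.rec (some (Sum.inl v0)) (fun t' r => r.bind (next t')) t with htr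
  have Tstep : ∀ t, tr (t + 1) = (tr t).bind (next t) := fun t => rfl
  have T0 : tr 0 = some (Sum.inl v0) := rfl
  -- sides
  have Tside : ∀ t, (∀ v : V, tr t = some (Sum.inl v) → t % 2 = 0) ∧
      (∀ w : W, tr t = some (Sum.inr w) → t % 2 = 1) := by
    intro t
    induction t with
    | zero =>
      constructor
      · intro v _; rfl
      · intro w hw; rw [T0] at hw; simp at hw
    | succ t ih =>
      constructor
      · intro v hv
        rw [Tstep] at hv
        rcases hy : tr t with _ | y
        · rw [hy] at hv; simp at hv
        · rw [hy] at hv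
          simp only [Option.bind_some, hnext, Sum.elim_inl, Sum.elim_inr] at hv
          cases y with
          | inl v' =>
            simp only [hnext, Sum.elim_inl, Sum.elim_inr] at hv
            split at hv
            · simp at hv
            · simp at hv
          | inr w' =>
            have := ih.2 w' hy
            omega
      · intro w hw
        rw [Tstep] at hw
        rcases hy : tr t with _ | y
        · rw [hy] at hw; simp at hw
        · rw [hy] at hw
          simp only [Option.bind_some, hnext, Sum.elim_inl, Sum.elim_inr] at hw
          cases y with
          | inr w' =>
            simp only [hnext, Sum.elim_inl, Sum.elim_inr] at hw
            split at hw
            · simp at hw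
            · simp at hw
          | inl v' =>
            have := ih.1 v' hy
            omega
  -- edges
  have Tedge_l : ∀ t w, tr (t + 1) = some (Sum.inr w) →
      ∃ v, tr t = some (Sum.inl v) ∧ R v w ∧ C v w = c t := by
    intro t w hw
    rw [Tstep] at hw
    rcases hy : tr t with _ | y
    · rw [hy] at hw; simp at hw
    · rw [hy] at hw
      simp only [Option.bind_some, hnext, Sum.elim_inl, Sum.elim_inr] at hw
      cases y with
      | inl v' =>
        simp only [Sum.elim_inl, Sum.elim_inr] at hw
        split at hw
        next h =>
          simp only [Option.some_inj, Sum.inr.injEq] at hw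
          have hspec := h.choose_spec
          rw [Finset.mem_filter] at hspec
          refine ⟨v', rfl, ?_⟩
          rw [← hw]
          exact hspec.2
        next => simp at hw
      | inr w' =>
        simp only [Sum.elim_inl, Sum.elim_inr] at hw
        split at hw
        · simp at hw
        · simp at hw
  have Tedge_r : ∀ t v, tr (t + 1) = some (Sum.inl v) →
      ∃ w, tr t = some (Sum.inr w) ∧ R v w ∧ C v w = c t := by
    intro t v hv
    rw [Tstep] at hv
    rcases hy : tr t with _ | y
    · rw [hy] at hv; simp at hv
    · rw [hy] at hv
      simp only [Option.bind_some, hnext, Sum.elim_inl, Sum.elim_inr] at hv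
      cases y with
      | inr w' =>
        simp only [Sum.elim_inl, Sum.elim_inr] at hv
        split at hv
        next h =>
          simp only [Option.some_inj, Sum.inl.injEq] at hv
          have hspec := h.choose_spec
          rw [Finset.mem_filter] at hspec
          refine ⟨w', rfl, ?_⟩
          rw [← hv]
          exact hspec.2
        next => simp at hv
      | inl v' =>
        simp only [Sum.elim_inl, Sum.elim_inr] at hv
        split at hv
        · simp at hv
        · simp at hv
  -- coverage
  have Tcover : ∀ x, Relation.ReflTransGen (kstep R C i j) (Sum.inl v0) x →
      ∃ t, tr t = some x := by
    intro x hx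
    induction hx with
    | refl => exact ⟨0, rfl⟩
    | @tail y z hyy hstep ih =>
      obtain ⟨t, ht⟩ := ih
      cases y with
      | inl v =>
        cases z with
        | inl v'' => exact absurd hstep (by simp [kstep])
        | inr w =>
          obtain ⟨hRvw, hcol⟩ : R v w ∧ (C v w = i ∨ C v w = j) := hstep
          have hteven : t % 2 = 0 := (Tside t).1 v ht
          have hct : c t = j := by simp [hc, hteven]
          rcases hcol with hcol | hcol
          · -- arrival color i : must have come from t-1
            rcases Nat.eq_zero_or_pos t with rfl | htpos
            · rw [T0] at ht
              simp only [Option.some_inj, Sum.inl.injEq] at ht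
              subst ht
              exact absurd hcol (hi w hRvw)
            · obtain ⟨t', rfl⟩ : ∃ t', t = t' + 1 := ⟨t - 1, by omega⟩
              obtain ⟨w', hw', hRw', hCw'⟩ := Tedge_r t' v ht
              have ht'odd : t' % 2 = 1 := by omega
              have hct' : c t' = i := by simp [hc, ht'odd]
              rw [hct'] at hCw'
              have : w' = w := properL v w' w hRw' hRvw (by rw [hCw', hcol])
              subst this
              exact ⟨t', hw'⟩
          · -- departure color j = c t : next step
            have hne : (Finset.univ.filter (fun w' => R v w' ∧ C v w' = c t)).Nonempty := by
              refine ⟨w, ?_⟩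
              rw [Finset.mem_filter]
              exact ⟨Finset.mem_univ _, hRvw, by rw [hct, hcol]⟩
            refine ⟨t + 1, ?_⟩
            rw [Tstep, ht]
            simp only [Option.bind_some, hnext, Sum.elim_inl, Sum.elim_inr]
            rw [dif_pos hne]
            have hspec := hne.choose_spec
            rw [Finset.mem_filter] at hspec
            have : hne.choose = w := properL v _ w hspec.2.1 hRvw (by rw [hspec.2.2, hct, hcol])
            rw [this]
      | inr w =>
        cases z with
        | inr w'' => exact absurd hstep (by simp [kstep])
        | inl v =>
          obtain ⟨hRvw, hcol⟩ : R v w ∧ (C v w = i ∨ C v w = j) := hstep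
          have htodd : t % 2 = 1 := (Tside t).2 w ht
          have hct : c t = i := by simp [hc, htodd]
          rcases hcol with hcol | hcol
          · -- departure color i = c t
            have hne : (Finset.univ.filter (fun v' => R v' w ∧ C v' w = c t)).Nonempty := by
              refine ⟨v, ?_⟩
              rw [Finset.mem_filter]
              exact ⟨Finset.mem_univ _, hRvw, by rw [hct, hcol]⟩
            refine ⟨t + 1, ?_⟩
            rw [Tstep, ht]
            simp only [Option.bind_some, hnext, Sum.elim_inl, Sum.elim_inr]
            rw [dif_pos hne]
            have hspec := hne.choose_spec
            rw [Finset.mem_filter] at hspec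
            have : hne.choose = v := properR _ v w hspec.2.1 hRvw (by rw [hspec.2.2, hct, hcol])
            rw [this]
          · -- arrival color j : from t-1
            obtain ⟨t', rfl⟩ : ∃ t', t = t' + 1 := ⟨t - 1, by omega⟩
            obtain ⟨v', hv', hRv', hCv'⟩ := Tedge_l t' w ht
            have ht'even : t' % 2 = 0 := by omega
            have hct' : c t' = j := by simp [hc, ht'even]
            rw [hct'] at hCv'
            have : v' = v := properR v' v w hRv' hRvw (by rw [hCv', hcol])
            subst this
            exact ⟨t', hv'⟩
  -- conclude
  obtain ⟨t, ht⟩ := Tcover _ hreach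
  have htodd : t % 2 = 1 := (Tside t).2 w0 ht
  obtain ⟨t', rfl⟩ : ∃ t', t = t' + 1 := ⟨t - 1, by omega⟩
  obtain ⟨v, _, hRv, hCv⟩ := Tedge_l t' w0 ht
  have ht'even : t' % 2 = 0 := by omega
  rw [show c t' = j by simp [hc, ht'even]] at hCv
  exact hj v hRv hCv


lemma exists_missing {α : Type} [DecidableEq α] (s : Finset α) (f : α → ℕ) {k : ℕ}
    (h : s.card < k) : ∃ i, i < k ∧ ∀ w ∈ s, f w ≠ i := by
  by_contra hc
  push_neg at hc
  have hsub : Finset.range k ⊆ s.image f := by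
    intro i hi
    rw [Finset.mem_range] at hi
    obtain ⟨w, hw, hfw⟩ := hc i hi
    rw [Finset.mem_image]
    exact ⟨w, hw, hfw⟩
  have := Finset.card_le_card hsub
  have h2 := Finset.card_image_le (s := s) (f := f)
  rw [Finset.card_range] at this
  omega

lemma konig (N : ℕ) : ∀ (V W : Type) [Fintype V] [Fintype W] [DecidableEq V] [DecidableEq W]
    (R : V → W → Prop) [∀ v w, Decidable (R v w)] (k : ℕ),
    ((Finset.univ ×ˢ Finset.univ).filter (fun p : V × W => R p.1 p.2)).card ≤ N →
    (∀ v, (Finset.univ.filter (fun w => R v w)).card ≤ k) →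
    (∀ w, (Finset.univ.filter (fun v => R v w)).card ≤ k) →
    ∃ C : V → W → ℕ, (∀ v w, R v w → C v w < k) ∧
      (∀ v w w', R v w → R v w' → C v w = C v w' → w = w') ∧
      (∀ v v' w, R v w → R v' w → C v w = C v' w → v = v') := by
  induction N with
  | zero =>
    intro V W _ _ _ _ R _ k hcard _ _
    have hempty : ∀ v w, ¬ R v w := by
      intro v w hR
      have : (v, w) ∈ (Finset.univ ×ˢ Finset.univ).filter (fun p : V × W => R p.1 p.2) := by
        simp [hR]
      have h1 := Finset.card_pos.mpr ⟨_, this⟩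
      omega
    exact ⟨fun _ _ => 0, fun v w hR => absurd hR (hempty v w),
      fun v w w' hR => absurd hR (hempty v w), fun v v' w hR => absurd hR (hempty v w)⟩
  | succ N ih =>
    intro V W _ _ _ _ R _ k hcard hdegL hdegR
    classical
    by_cases hex : ∃ p : V × W, R p.1 p.2
    case neg =>
      exact ⟨fun _ _ => 0, fun v w hR => absurd ⟨(v, w), hR⟩ hex,
        fun v w w' hR => absurd ⟨(v, w), hR⟩ hex, fun v v' w hR => absurd ⟨(v, w), hR⟩ hex⟩
    obtain ⟨⟨v0, w0⟩, hR0⟩ := hex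
    set R' : V → W → Prop := fun v w => R v w ∧ ¬(v = v0 ∧ w = w0) with hR'
    have hR'sub : ∀ {v w}, R' v w → R v w := fun h => h.1
    have hpairs : (Finset.univ ×ˢ Finset.univ).filter (fun p : V × W => R' p.1 p.2)
        = ((Finset.univ ×ˢ Finset.univ).filter (fun p : V × W => R p.1 p.2)).erase (v0, w0) := by
      ext ⟨v, w⟩
      simp only [Finset.mem_erase, Finset.mem_filter, Finset.mem_product, Finset.mem_univ,
        true_and, hR', Prod.mk.injEq, and_comm, Ne, Prod.ext_iff]
    have hmem0 : (v0, w0) ∈ (Finset.univ ×ˢ Finset.univ).filter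
        (fun p : V × W => R p.1 p.2) := by simp [hR0]
    have hcard' : ((Finset.univ ×ˢ Finset.univ).filter
        (fun p : V × W => R' p.1 p.2)).card ≤ N := by
      rw [hpairs]
      have := Finset.card_erase_add_one hmem0
      omega
    have hdegL' : ∀ v, (Finset.univ.filter (fun w => R' v w)).card ≤ k := by
      intro v
      refine le_trans (Finset.card_le_card ?_) (hdegL v)
      intro w hw
      simp only [Finset.mem_filter] at hw ⊢
      exact ⟨hw.1, hw.2.1⟩
    have hdegR' : ∀ w, (Finset.univ.filter (fun v => R' v w)).card ≤ k := by
      intro w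
      refine le_trans (Finset.card_le_card ?_) (hdegR w)
      intro v hv
      simp only [Finset.mem_filter] at hv ⊢
      exact ⟨hv.1, hv.2.1⟩
    obtain ⟨C', hbd', hpL', hpR'⟩ := ih V W R' k hcard' hdegL' hdegR'
    -- missing colors at v0 and w0
    have hrow : (Finset.univ.filter (fun w => R' v0 w)).card < k := by
      have hsub : (Finset.univ.filter (fun w => R' v0 w))
          ⊆ (Finset.univ.filter (fun w => R v0 w)).erase w0 := by
        intro w hw
        simp only [Finset.mem_filter, Finset.mem_univ, true_and, hR', Finset.mem_erase] at hw ⊢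
        tauto
      have h1 := Finset.card_le_card hsub
      have hw0 : w0 ∈ Finset.univ.filter (fun w => R v0 w) := by simp [hR0]
      have h2 := Finset.card_erase_add_one hw0
      have h3 := hdegL v0
      have h4 := Finset.card_pos.mpr ⟨w0, hw0⟩
      omega
    have hcol : (Finset.univ.filter (fun v => R' v w0)).card < k := by
      have hsub : (Finset.univ.filter (fun v => R' v w0))
          ⊆ (Finset.univ.filter (fun v => R v w0)).erase v0 := by
        intro v hv
        simp only [Finset.mem_filter, Finset.mem_univ, true_and, hR', Finset.mem_erase] at hv ⊢
        tauto
      have h1 := Finset.card_le_card hsub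
      have hv0 : v0 ∈ Finset.univ.filter (fun v => R v w0) := by simp [hR0]
      have h2 := Finset.card_erase_add_one hv0
      have h3 := hdegR w0
      have h4 := Finset.card_pos.mpr ⟨v0, hv0⟩
      omega
    obtain ⟨i, hik, hi⟩ := exists_missing _ (fun w => C' v0 w) hrow
    obtain ⟨j, hjk, hj⟩ := exists_missing _ (fun v => C' v w0) hcol
    have hi' : ∀ w, R' v0 w → C' v0 w ≠ i := by
      intro w hw
      exact hi w (by simp only [Finset.mem_filter, Finset.mem_univ, true_and]; exact hw)
    have hj' : ∀ v, R' v w0 → C' v w0 ≠ j := by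
      intro v hv
      exact hj v (by simp only [Finset.mem_filter, Finset.mem_univ, true_and]; exact hv)
    by_cases hij : i = j
    · -- easy case: color the new edge i
      subst hij
      refine ⟨fun v w => if v = v0 ∧ w = w0 then i else C' v w, ?_, ?_, ?_⟩
      · intro v w hR
        dsimp only
        by_cases hp : v = v0 ∧ w = w0
        · rw [if_pos hp]; exact hik
        · rw [if_neg hp]; exact hbd' v w ⟨hR, hp⟩
      · intro v w w' hRw hRw' heq
        dsimp only at heq
        by_cases hp : v = v0 ∧ w = w0
        · by_cases hp' : v = v0 ∧ w' = w0
          · rw [hp.2, hp'.2]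
          · obtain ⟨hv1, hw1⟩ := hp
            subst hv1; subst hw1
            rw [if_pos ⟨rfl, rfl⟩, if_neg hp'] at heq
            exact absurd heq.symm (hi' w' ⟨hRw', fun hh => hp' ⟨rfl, hh.2⟩⟩)
        · by_cases hp' : v = v0 ∧ w' = w0
          · obtain ⟨hv1, hw1⟩ := hp'
            subst hv1; subst hw1
            rw [if_neg hp, if_pos ⟨rfl, rfl⟩] at heq
            exact absurd heq (hi' w ⟨hRw, fun hh => hp ⟨rfl, hh.2⟩⟩)
          · rw [if_neg hp, if_neg hp'] at heq
            exact hpL' v w w' ⟨hRw, hp⟩ ⟨hRw', hp'⟩ heq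
      · intro v v' w hRv hRv' heq
        dsimp only at heq
        by_cases hp : v = v0 ∧ w = w0
        · by_cases hp' : v' = v0 ∧ w = w0
          · rw [hp.1, hp'.1]
          · obtain ⟨hv1, hw1⟩ := hp
            subst hv1; subst hw1
            rw [if_pos ⟨rfl, rfl⟩, if_neg hp'] at heq
            exact absurd heq.symm (hj' v' ⟨hRv', fun hh => hp' ⟨hh.1, rfl⟩⟩)
        · by_cases hp' : v' = v0 ∧ w = w0
          · obtain ⟨hv1, hw1⟩ := hp'
            subst hv1; subst hw1
            rw [if_neg hp, if_pos ⟨rfl, rfl⟩] at heq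
            exact absurd heq (hj' v ⟨hRv, fun hh => hp ⟨hh.1, rfl⟩⟩)
          · rw [if_neg hp, if_neg hp'] at heq
            exact hpR' v v' w ⟨hRv, hp⟩ ⟨hRv', hp'⟩ heq
    · -- Kempe swap case
      have hnreach := kempe_no_reach R' C' hpL' hpR' i j hij v0 w0 hi' hj'
      set InS : V → Prop := fun v =>
        Relation.ReflTransGen (kstep R' C' i j) (Sum.inl v0) (Sum.inl v) with hInS
      set InSr : W → Prop := fun w =>
        Relation.ReflTransGen (kstep R' C' i j) (Sum.inl v0) (Sum.inr w) with hInSr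
      set σ : ℕ → ℕ := fun c => if c = i then j else if c = j then i else c with hσ
      have hσinj : ∀ a b, σ a = σ b → a = b := by
        intro a b
        simp only [hσ]
        split_ifs <;> omega
      have hσlt : ∀ a, a < k → σ a < k := by
        intro a ha
        simp only [hσ]
        split_ifs <;> omega
      have hK2 : ∀ v w, R' v w → (C' v w = i ∨ C' v w = j) → (InS v ↔ InSr w) := by
        intro v w hRe hC
        constructor
        · intro h
          exact h.tail (show kstep R' C' i j (Sum.inl v) (Sum.inr w) from ⟨hRe, hC⟩)
        · intro h
          exact h.tail (show kstep R' C' i j (Sum.inr w) (Sum.inl v) from ⟨hRe, hC⟩)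
      set C'' : V → W → ℕ := fun v w =>
        if (C' v w = i ∨ C' v w = j) ∧ InS v then σ (C' v w) else C' v w with hC''
      have hσid : ∀ c, ¬(c = i ∨ c = j) → σ c = c := by
        intro c hc
        push_neg at hc
        simp only [hσ, if_neg hc.1, if_neg hc.2]
      have hleft1 : ∀ v, InS v → ∀ w, C'' v w = σ (C' v w) := by
        intro v hv w
        simp only [hC'']
        by_cases hc : C' v w = i ∨ C' v w = j
        · rw [if_pos ⟨hc, hv⟩]
        · rw [if_neg (fun hh => hc hh.1), hσid _ hc]
      have hleft2 : ∀ v, ¬ InS v → ∀ w, C'' v w = C' v w := by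
        intro v hv w
        simp only [hC'']
        rw [if_neg (fun hh => hv hh.2)]
      have hright1 : ∀ w, InSr w → ∀ v, R' v w → C'' v w = σ (C' v w) := by
        intro w hw v hRe
        simp only [hC'']
        by_cases hc : C' v w = i ∨ C' v w = j
        · rw [if_pos ⟨hc, (hK2 v w hRe hc).mpr hw⟩]
        · rw [if_neg (fun hh => hc hh.1), hσid _ hc]
      have hright2 : ∀ w, ¬ InSr w → ∀ v, R' v w → C'' v w = C' v w := by
        intro w hw v hRe
        simp only [hC'']
        by_cases hc : C' v w = i ∨ C' v w = j
        · rw [if_neg (fun hh => hw ((hK2 v w hRe hc).mp hh.2))]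
        · rw [if_neg (fun hh => hc hh.1)]
      have hbd'' : ∀ v w, R' v w → C'' v w < k := by
        intro v w hRe
        simp only [hC'']
        split_ifs
        · exact hσlt _ (hbd' v w hRe)
        · exact hbd' v w hRe
      have hpL'' : ∀ v w w', R' v w → R' v w' → C'' v w = C'' v w' → w = w' := by
        intro v w w' h1 h2 heq
        by_cases hv : InS v
        · rw [hleft1 v hv w, hleft1 v hv w'] at heq
          exact hpL' v w w' h1 h2 (hσinj _ _ heq)
        · rw [hleft2 v hv w, hleft2 v hv w'] at heq
          exact hpL' v w w' h1 h2 heq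
      have hpR'' : ∀ v v' w, R' v w → R' v' w → C'' v w = C'' v' w → v = v' := by
        intro v v' w h1 h2 heq
        by_cases hw : InSr w
        · rw [hright1 w hw v h1, hright1 w hw v' h2] at heq
          exact hpR' v v' w h1 h2 (hσinj _ _ heq)
        · rw [hright2 w hw v h1, hright2 w hw v' h2] at heq
          exact hpR' v v' w h1 h2 heq
      have hM1 : ∀ w, R' v0 w → C'' v0 w ≠ j := by
        intro w hRw hcon
        rw [hleft1 v0 Relation.ReflTransGen.refl w] at hcon
        by_cases h1 : C' v0 w = i
        · exact hi' w hRw h1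
        · simp only [hσ, if_neg h1] at hcon
          split_ifs at hcon with h2
          · exact hij hcon.symm.symm
          · exact h2 hcon
      have hM2 : ∀ v, R' v w0 → C'' v w0 ≠ j := by
        intro v hRv
        rw [hright2 w0 hnreach v hRv]
        exact hj' v hRv
      refine ⟨fun v w => if v = v0 ∧ w = w0 then j else C'' v w, ?_, ?_, ?_⟩
      · intro v w hRe
        dsimp only
        by_cases hp : v = v0 ∧ w = w0
        · rw [if_pos hp]; exact hjk
        · rw [if_neg hp]; exact hbd'' v w ⟨hRe, hp⟩
      · intro v w w' hRw hRw' heq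
        dsimp only at heq
        by_cases hp : v = v0 ∧ w = w0
        · by_cases hp' : v = v0 ∧ w' = w0
          · rw [hp.2, hp'.2]
          · obtain ⟨hv1, hw1⟩ := hp
            subst hv1; subst hw1
            rw [if_pos ⟨rfl, rfl⟩, if_neg hp'] at heq
            exact absurd heq.symm (hM1 w' ⟨hRw', fun hh => hp' ⟨rfl, hh.2⟩⟩)
        · by_cases hp' : v = v0 ∧ w' = w0
          · obtain ⟨hv1, hw1⟩ := hp'
            subst hv1; subst hw1
            rw [if_neg hp, if_pos ⟨rfl, rfl⟩] at heq
            exact absurd heq (hM1 w ⟨hRw, fun hh => hp ⟨rfl, hh.2⟩⟩)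
          · rw [if_neg hp, if_neg hp'] at heq
            exact hpL'' v w w' ⟨hRw, hp⟩ ⟨hRw', hp'⟩ heq
      · intro v v' w hRv hRv' heq
        dsimp only at heq
        by_cases hp : v = v0 ∧ w = w0
        · by_cases hp' : v' = v0 ∧ w = w0
          · rw [hp.1, hp'.1]
          · obtain ⟨hv1, hw1⟩ := hp
            subst hv1; subst hw1
            rw [if_pos ⟨rfl, rfl⟩, if_neg hp'] at heq
            exact absurd heq.symm (hM2 v' ⟨hRv', fun hh => hp' ⟨hh.1, rfl⟩⟩)
        · by_cases hp' : v' = v0 ∧ w = w0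
          · obtain ⟨hv1, hw1⟩ := hp'
            subst hv1; subst hw1
            rw [if_neg hp, if_pos ⟨rfl, rfl⟩] at heq
            exact absurd heq (hM2 v ⟨hRv, fun hh => hp ⟨hh.1, rfl⟩⟩)
          · rw [if_neg hp, if_neg hp'] at heq
            exact hpR'' v v' w ⟨hRv, hp⟩ ⟨hRv', hp'⟩ heq

section Core
open Finset
variable {V : Type} [Fintype V] [DecidableEq V] (G : SimpleGraph V) [DecidableRel G.Adj]

lemma core (a b : ℕ) (ha : Even a) (hb : Even b) (hdeg : ∀ v, G.degree v ≤ a + b) :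
    ∃ c : Sym2 V → Bool, ∀ v : V,
      (Finset.univ.filter (fun w => G.Adj v w ∧ c s(v, w) = true)).card ≤ a ∧
      (Finset.univ.filter (fun w => G.Adj v w ∧ c s(v, w) = false)).card ≤ b := by
  classical
  obtain ⟨p, rfl⟩ := ha
  obtain ⟨q, rfl⟩ := hb
  set k := p + q with hk
  obtain ⟨o, hflip, hbal⟩ := exists_balanced G
  set R : V → V → Prop := fun v w => G.Adj v w ∧ o v w = true with hR
  have hdegL : ∀ v, (Finset.univ.filter (fun w => R v w)).card ≤ k := by
    intro v
    have h1 := (hbal v).1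
    have h2 := hdeg v
    have : (Finset.univ.filter (fun w => R v w)).card = outd G o v := rfl
    omega
  have hdegR : ∀ w, (Finset.univ.filter (fun v => R v w)).card ≤ k := by
    intro w
    have h1 := (hbal w).2
    have h2 := hdeg w
    have h3 := outd_add_ind G hflip w
    have : (Finset.univ.filter (fun v => R v w)).card = ind G o w := by
      unfold ind
      congr 1
      apply filter_congr
      intro v _
      simp only [hR]
      constructor
      · rintro ⟨h4, h5⟩; exact ⟨h4.symm, h5⟩
      · rintro ⟨h4, h5⟩; exact ⟨h4.symm, h5⟩
    omega
  obtain ⟨C, hbd, hpL, hpR⟩ := konig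
    (((Finset.univ ×ˢ Finset.univ).filter (fun pr : V × V => R pr.1 pr.2)).card)
    V V R k le_rfl hdegL hdegR
  set f : V → V → Bool := fun v w =>
    if o v w = true then decide (C v w < p) else decide (C w v < p) with hf
  have hsymm : ∀ v w, f v w = f w v := by
    intro v w
    by_cases hvw : v = w
    · rw [hvw]
    · have hh := hflip v w hvw
      simp only [hf]
      rcases Bool.eq_false_or_eq_true (o v w) with h1 | h1
      · have h2 : o w v = false := by
          rw [h1] at hh
          simpa using hh.symm
        rw [h1, h2]
        simp
      · have h2 : o w v = true := by
          rw [h1] at hh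
          simpa using hh.symm
        rw [h1, h2]
        simp
  refine ⟨Sym2.lift ⟨f, hsymm⟩, ?_⟩
  intro v
  have hlift : ∀ w, (Sym2.lift ⟨f, hsymm⟩) s(v, w) = f v w := fun w => Sym2.lift_mk _ _ _
  constructor
  · -- red count
    have hsub : (Finset.univ.filter (fun w => G.Adj v w ∧ (Sym2.lift ⟨f, hsymm⟩) s(v, w) = true))
        ⊆ (Finset.univ.filter (fun w => R v w ∧ C v w < p))
          ∪ (Finset.univ.filter (fun w => R w v ∧ C w v < p)) := by
      intro w hw
      simp only [mem_filter, mem_univ, true_and, hlift w] at hw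
      obtain ⟨hadj, hcol⟩ := hw
      rw [Finset.mem_union]
      simp only [mem_filter, mem_univ, true_and, hR]
      rcases Bool.eq_false_or_eq_true (o v w) with h1 | h1
      · left
        simp only [hf, h1, if_pos] at hcol
        simp at hcol
        exact ⟨⟨hadj, h1⟩, hcol⟩
      · right
        have h2 : o w v = true := by
          have hh := hflip v w hadj.ne
          rw [h1] at hh
          simpa using hh.symm
        simp only [hf, h1] at hcol
        simp at hcol
        exact ⟨⟨hadj.symm, h2⟩, hcol⟩
    have hA1 : (Finset.univ.filter (fun w => R v w ∧ C v w < p)).card ≤ p := by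
      have := Finset.card_le_card_of_injOn (fun w => C v w)
        (s := Finset.univ.filter (fun w => R v w ∧ C v w < p)) (t := Finset.range p)
        (by intro w hw
            simp only [Finset.mem_coe, mem_filter, mem_univ, true_and] at hw
            simp [hw.2])
        (by intro w1 h1 w2 h2 heq
            simp only [coe_filter, Set.mem_setOf_eq, mem_univ, true_and] at h1 h2
            exact hpL v w1 w2 h1.1 h2.1 heq)
      simpa using this
    have hA2 : (Finset.univ.filter (fun w => R w v ∧ C w v < p)).card ≤ p := by
      have := Finset.card_le_card_of_injOn (fun w => C w v)
        (s := Finset.univ.filter (fun w => R w v ∧ C w v < p)) (t := Finset.range p)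
        (by intro w hw
            simp only [Finset.mem_coe, mem_filter, mem_univ, true_and] at hw
            simp [hw.2])
        (by intro w1 h1 w2 h2 heq
            simp only [coe_filter, Set.mem_setOf_eq, mem_univ, true_and] at h1 h2
            exact hpR w1 w2 v h1.1 h2.1 heq)
      simpa using this
    calc (Finset.univ.filter (fun w => G.Adj v w ∧ (Sym2.lift ⟨f, hsymm⟩) s(v, w) = true)).card
        ≤ ((Finset.univ.filter (fun w => R v w ∧ C v w < p))
            ∪ (Finset.univ.filter (fun w => R w v ∧ C w v < p))).card :=
          Finset.card_le_card hsub
      _ ≤ _ + _ := Finset.card_union_le _ _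
      _ ≤ p + p := add_le_add hA1 hA2
  · -- blue count
    have hsub : (Finset.univ.filter (fun w => G.Adj v w ∧ (Sym2.lift ⟨f, hsymm⟩) s(v, w) = false))
        ⊆ (Finset.univ.filter (fun w => R v w ∧ p ≤ C v w))
          ∪ (Finset.univ.filter (fun w => R w v ∧ p ≤ C w v)) := by
      intro w hw
      simp only [mem_filter, mem_univ, true_and, hlift w] at hw
      obtain ⟨hadj, hcol⟩ := hw
      rw [Finset.mem_union]
      simp only [mem_filter, mem_univ, true_and, hR]
      rcases Bool.eq_false_or_eq_true (o v w) with h1 | h1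
      · left
        simp only [hf, h1, if_pos] at hcol
        simp at hcol
        exact ⟨⟨hadj, h1⟩, hcol⟩
      · right
        have h2 : o w v = true := by
          have hh := hflip v w hadj.ne
          rw [h1] at hh
          simpa using hh.symm
        simp only [hf, h1] at hcol
        simp at hcol
        exact ⟨⟨hadj.symm, h2⟩, hcol⟩
    have hA1 : (Finset.univ.filter (fun w => R v w ∧ p ≤ C v w)).card ≤ q := by
      have := Finset.card_le_card_of_injOn (fun w => C v w)
        (s := Finset.univ.filter (fun w => R v w ∧ p ≤ C v w)) (t := Finset.Ico p (p + q))
        (by intro w hw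
            simp only [Finset.mem_coe, mem_filter, mem_univ, true_and] at hw
            have := hbd v w hw.1
            simp only [Finset.mem_coe, Finset.mem_Ico]
            omega)
        (by intro w1 h1 w2 h2 heq
            simp only [coe_filter, Set.mem_setOf_eq, mem_univ, true_and] at h1 h2
            exact hpL v w1 w2 h1.1 h2.1 heq)
      simpa using this
    have hA2 : (Finset.univ.filter (fun w => R w v ∧ p ≤ C w v)).card ≤ q := by
      have := Finset.card_le_card_of_injOn (fun w => C w v)
        (s := Finset.univ.filter (fun w => R w v ∧ p ≤ C w v)) (t := Finset.Ico p (p + q))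
        (by intro w hw
            simp only [Finset.mem_coe, mem_filter, mem_univ, true_and] at hw
            have := hbd w v hw.1
            simp only [Finset.mem_coe, Finset.mem_Ico]
            omega)
        (by intro w1 h1 w2 h2 heq
            simp only [coe_filter, Set.mem_setOf_eq, mem_univ, true_and] at h1 h2
            exact hpR w1 w2 v h1.1 h2.1 heq)
      simpa using this
    calc (Finset.univ.filter (fun w => G.Adj v w ∧ (Sym2.lift ⟨f, hsymm⟩) s(v, w) = false)).card
        ≤ ((Finset.univ.filter (fun w => R v w ∧ p ≤ C v w))
            ∪ (Finset.univ.filter (fun w => R w v ∧ p ≤ C w v))).card :=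
          Finset.card_le_card hsub
      _ ≤ _ + _ := Finset.card_union_le _ _
      _ ≤ q + q := add_le_add hA1 hA2

end Core

lemma no_star {V : Type} [Fintype V] [DecidableEq V] (G : SimpleGraph V) [DecidableRel G.Adj]
    (c : Sym2 V → Bool) (bl : Bool) (n : ℕ) (hn : 1 ≤ n)
    (hbound : ∀ v : V, (Finset.univ.filter (fun w => G.Adj v w ∧ c s(v, w) = bl)).card ≤ n - 1) :
    ¬ Contains (colorSub G c bl) (starG n) := by
  rintro ⟨f, hf⟩
  have hstar : ∀ i : Fin n, (starG n).Adj i.succ 0 :=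
    fun i => (show i.succ ≠ 0 ∧ (i.succ = 0 ∨ (0 : Fin (n + 1)) = 0) from
      ⟨Fin.succ_ne_zero i, Or.inr rfl⟩)
  have hadj : ∀ i : Fin n, G.Adj (f 0) (f i.succ) ∧ c s(f 0, f i.succ) = bl := by
    intro i
    have h : G.Adj (f i.succ) (f 0) ∧ c s(f i.succ, f 0) = bl := hf (hstar i)
    obtain ⟨h1, h2⟩ := h
    refine ⟨h1.symm, ?_⟩
    rwa [Sym2.eq_swap] at h2
  have hcard := Finset.card_le_card_of_injOn (fun i : Fin n => f i.succ)
    (s := (Finset.univ : Finset (Fin n)))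
    (t := Finset.univ.filter (fun w => G.Adj (f 0) w ∧ c s(f 0, w) = bl))
    (by intro i _
        simp only [Finset.mem_coe, Finset.mem_filter, Finset.mem_univ, true_and]
        exact hadj i)
    (by intro i _ j _ heq
        have := f.injective heq
        exact Fin.succ_injective _ this)
  rw [Finset.card_univ, Fintype.card_fin] at hcard
  have := hbound (f 0)
  omega


end StarRamsey

/-- If `n`, `m` are odd and `Δ(G) ≤ m + n - 2`, then `G` has a
`(K_{1,n}, K_{1,m})`-free red/blue edge coloring. -/
theorem free_coloring_of_odd_maxDegree_le {V : Type} [Fintype V] (G : SimpleGraph V)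
    [DecidableRel G.Adj] (n m : ℕ) (hn : Odd n) (hm : Odd m)
    (hΔ : G.maxDegree ≤ m + n - 2) :
    ∃ c : Sym2 V → Bool,
      ¬ Contains (colorSub G c true) (starG n) ∧
      ¬ Contains (colorSub G c false) (starG m) := by
  classical
  obtain ⟨s, hs⟩ := hn
  obtain ⟨t, ht⟩ := hm
  have hn1 : 1 ≤ n := by omega
  have hm1 : 1 ≤ m := by omega
  have hdeg : ∀ v, G.degree v ≤ (n - 1) + (m - 1) := by
    intro v
    have h1 := G.degree_le_maxDegree v
    omega
  obtain ⟨c, hc⟩ := StarRamsey.core G (n - 1) (m - 1) ⟨s, by omega⟩ ⟨t, by omega⟩ hdeg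
  refine ⟨c, ?_, ?_⟩
  · exact StarRamsey.no_star G c true n hn1 (fun v => (hc v).1)
  · exact StarRamsey.no_star G c false m hm1 (fun v => (hc v).2)
end

section
/- Every regular graph of even degree 2k can be decomposed into k edge-disjoint 2-factors (2-regular spanning subgraphs). -/
open SimpleGraph

section MyAux

variable {V : Type} [Fintype V] [DecidableEq V] {G : SimpleGraph V}

lemma my_step [DecidableRel G.Adj] (heven : ∀ v : V, Even (G.degree v)) {a v : V}
    (p : G.Walk a v) (hp : p.IsTrail) (hv : v ≠ a) :
    ∃ w, G.Adj v w ∧ s(v, w) ∉ p.edges := by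
  have hodd : ¬ Even (p.edges.countP fun e => v ∈ e) := by
    rw [hp.even_countP_edges_iff]
    intro h; exact absurd rfl (h hv.symm).2
  by_contra hcon
  push_neg at hcon
  -- then the filtered finset equals the incidence finset
  have hsub : (hp.edgesFinset.filter fun e => v ∈ e) = G.incidenceFinset v := by
    apply Finset.Subset.antisymm
    · intro e he
      simp only [Finset.mem_filter] at he
      rw [mem_incidenceFinset]
      exact ⟨p.edges_subset_edgeSet (by exact Multiset.mem_coe.mp he.1), he.2⟩
    · intro e he
      rw [mem_incidenceFinset] at he
      obtain ⟨he1, he2⟩ := he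
      obtain ⟨w, rfl⟩ : ∃ w, e = s(v, w) := ⟨Sym2.Mem.other he2, (Sym2.other_spec he2).symm⟩
      have hadj : G.Adj v w := he1
      simp only [Finset.mem_filter]
      exact ⟨hcon w hadj, he2⟩
  have hcard : (hp.edgesFinset.filter fun e => v ∈ e).card
      = p.edges.countP fun e => v ∈ e := by
    simp [Finset.card, Finset.filter, Multiset.countP_eq_card_filter,
      List.countP_eq_length_filter]
  rw [hsub, card_incidenceFinset_eq_degree] at hcard
  exact hodd (hcard ▸ heven v)

lemma my_trail_bound {u v : V} [DecidableRel G.Adj] {p : G.Walk u v} (hp : p.IsTrail) :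
    p.length ≤ G.edgeFinset.card := by
  rw [← p.length_edges]
  have : ∀ e ∈ p.edges, e ∈ G.edgeFinset := fun e he => by
    simpa using p.edges_subset_edgeSet he
  classical
  calc p.edges.length = p.edges.toFinset.card := (List.toFinset_card_of_nodup hp.edges_nodup).symm
    _ ≤ G.edgeFinset.card := Finset.card_le_card (fun e he => this e (List.mem_toFinset.mp he))

lemma my_extend [DecidableRel G.Adj] (heven : ∀ v : V, Even (G.degree v)) {a : V} :
    ∀ (n : ℕ) {v : V} (p : G.Walk a v), p.IsTrail → v ≠ a →
      G.edgeFinset.card ≤ p.length + n →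
      ∃ q : G.Walk a a, q.IsTrail ∧ 0 < q.length := by
  intro n
  induction n with
  | zero =>
    intro v p hp hv hle
    exfalso
    obtain ⟨w, hadj, hne⟩ := my_step heven p hp hv
    have hq : (p.concat hadj).IsTrail := by
      rw [Walk.isTrail_def, Walk.edges_concat, List.concat_eq_append, List.nodup_append]
      exact ⟨hp.edges_nodup, List.nodup_singleton _, by intro x hx y hy h; simp at hy; subst hy; subst h; exact hne hx⟩
    have := my_trail_bound hq
    rw [Walk.length_concat] at this
    omega
  | succ n ih =>
    intro v p hp hv hle
    obtain ⟨w, hadj, hne⟩ := my_step heven p hp hv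
    have hq : (p.concat hadj).IsTrail := by
      rw [Walk.isTrail_def, Walk.edges_concat, List.concat_eq_append, List.nodup_append]
      exact ⟨hp.edges_nodup, List.nodup_singleton _, by intro x hx y hy h; simp at hy; subst hy; subst h; exact hne hx⟩
    by_cases hw : w = a
    · subst hw
      exact ⟨p.concat hadj, hq, by rw [Walk.length_concat]; omega⟩
    · exact ih (p.concat hadj) hq hw (by rw [Walk.length_concat]; omega)

lemma my_exists_closed_trail [DecidableRel G.Adj] (heven : ∀ v : V, Even (G.degree v))
    {a b : V} (hab : G.Adj a b) :
    ∃ q : G.Walk a a, q.IsTrail ∧ 0 < q.length := by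
  have hp : (Walk.cons hab Walk.nil).IsTrail := by simp [Walk.isTrail_def]
  exact my_extend heven (G.edgeFinset.card) (Walk.cons hab Walk.nil) hp hab.ne'
    (by simp)

lemma my_dart_count {a : V} (p : G.Walk a a) (v : V) :
    p.darts.countP (fun d => d.toProd.1 = v) = p.darts.countP (fun d => d.toProd.2 = v) := by
  have h1 : p.darts.map (·.toProd.1) = p.support.dropLast := p.map_fst_darts
  have h2 : p.darts.map (·.toProd.2) = p.support.tail := p.map_snd_darts
  have e1 : p.darts.countP (fun d => d.toProd.1 = v) = p.support.dropLast.count v := by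
    rw [← h1, List.count_eq_countP, List.countP_map]; rfl
  have e2 : p.darts.countP (fun d => d.toProd.2 = v) = p.support.tail.count v := by
    rw [← h2, List.count_eq_countP, List.countP_map]; rfl
  have hs : p.support.dropLast ++ [a] = p.support := by
    have h3 := List.dropLast_append_getLast (l := p.support) (by simp)
    rwa [p.getLast_support] at h3
  have hc1 : p.support.dropLast.count v + [a].count v = p.support.count v := by
    rw [← List.count_append, hs]
  have hc2 : p.support.count v = [a].count v + p.support.tail.count v := by
    conv_lhs => rw [p.support_eq_cons]
    rw [← List.count_append]; rfl
  rw [e1, e2]; omega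

set_option linter.unusedSectionVars false

lemma my_darts_nodup {u w : V} {p : G.Walk u w} (hp : p.IsTrail) : p.darts.Nodup := by
  have := hp.edges_nodup
  rw [Walk.edges] at this
  exact this.of_map _

lemma my_dartset_fst {a : V} (p : G.Walk a a) (hp : p.IsTrail) (v : V) :
    {u | ∃ d ∈ p.darts, d.toProd = (v, u)}.ncard
      = p.darts.countP (fun d => d.toProd.1 = v) := by
  classical
  have hnd : p.darts.Nodup := my_darts_nodup hp
  have hset : {u | ∃ d ∈ p.darts, d.toProd = (v, u)}
      = ↑((p.darts.toFinset.filter (fun d => d.toProd.1 = v)).image (fun d => d.toProd.2)) := by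
    ext u
    simp only [Set.mem_setOf_eq, Finset.coe_image, Set.mem_image, Finset.mem_coe,
      Finset.mem_filter, List.mem_toFinset]
    constructor
    · rintro ⟨d, hd, hdp⟩
      exact ⟨d, ⟨hd, by rw [hdp]⟩, by rw [hdp]⟩
    · rintro ⟨d, ⟨hd, h1⟩, h2⟩
      exact ⟨d, hd, Prod.ext h1 h2⟩
  rw [hset, Set.ncard_coe_finset]
  rw [Finset.card_image_of_injOn]
  · rw [show (Finset.filter (fun d => d.toProd.1 = v) p.darts.toFinset)
        = (p.darts.filter (fun d => d.toProd.1 = v)).toFinset by ext d; simp,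
      List.toFinset_card_of_nodup (hnd.filter _), List.countP_eq_length_filter]
  · intro d hd d' hd' h
    simp only [Finset.coe_filter, Set.mem_setOf_eq, List.mem_toFinset] at hd hd'
    exact SimpleGraph.Dart.ext _ _ (Prod.ext (hd.2.trans hd'.2.symm) h)

lemma my_dartset_snd {a : V} (p : G.Walk a a) (hp : p.IsTrail) (v : V) :
    {u | ∃ d ∈ p.darts, d.toProd = (u, v)}.ncard
      = p.darts.countP (fun d => d.toProd.2 = v) := by
  classical
  have hnd : p.darts.Nodup := my_darts_nodup hp
  have hset : {u | ∃ d ∈ p.darts, d.toProd = (u, v)}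
      = ↑((p.darts.toFinset.filter (fun d => d.toProd.2 = v)).image (fun d => d.toProd.1)) := by
    ext u
    simp only [Set.mem_setOf_eq, Finset.coe_image, Set.mem_image, Finset.mem_coe,
      Finset.mem_filter, List.mem_toFinset]
    constructor
    · rintro ⟨d, hd, hdp⟩
      exact ⟨d, ⟨hd, by rw [hdp]⟩, by rw [hdp]⟩
    · rintro ⟨d, ⟨hd, h1⟩, h2⟩
      exact ⟨d, hd, Prod.ext h2 h1⟩
  rw [hset, Set.ncard_coe_finset]
  rw [Finset.card_image_of_injOn]
  · rw [show (Finset.filter (fun d => d.toProd.2 = v) p.darts.toFinset)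
        = (p.darts.filter (fun d => d.toProd.2 = v)).toFinset by ext d; simp,
      List.toFinset_card_of_nodup (hnd.filter _), List.countP_eq_length_filter]
  · intro d hd d' hd' h
    simp only [Finset.coe_filter, Set.mem_setOf_eq, List.mem_toFinset] at hd hd'
    exact SimpleGraph.Dart.ext _ _ (Prod.ext h (hd.2.trans hd'.2.symm))

lemma my_ncard_deg [DecidableRel G.Adj] (v : V) : (G.neighborSet v).ncard = G.degree v := by
  rw [← card_neighborFinset_eq_degree, neighborFinset_def, Set.ncard_eq_toFinset_card']

lemma my_orient (n : ℕ) : ∀ (G : SimpleGraph V),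
    (∀ v, Even ((G.neighborSet v).ncard)) → G.edgeSet.ncard ≤ n →
    ∃ o : V → V → Prop, (∀ x y, o x y → G.Adj x y) ∧
      (∀ x y, G.Adj x y → (o x y ↔ ¬ o y x)) ∧
      (∀ v, {u | o v u}.ncard = {u | o u v}.ncard) := by
  induction n with
  | zero =>
    intro G heven hcard
    have hemp : ∀ x y, ¬ G.Adj x y := by
      intro x y hxy
      have : s(x,y) ∈ G.edgeSet := hxy
      have := Set.ncard_pos (G.edgeSet.toFinite) |>.mpr ⟨_, this⟩
      omega
    exact ⟨fun _ _ => False, by simp, fun x y h => absurd h (hemp x y), by simp⟩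
  | succ n ih =>
    intro G heven hcard
    classical
    by_cases hemp : ∀ x y, ¬ G.Adj x y
    · exact ⟨fun _ _ => False, by simp, fun x y h => absurd h (hemp x y), by simp⟩
    push_neg at hemp
    obtain ⟨x, y, hxy⟩ := hemp
    have hdeg : ∀ v, Even (G.degree v) := by
      intro v; rw [← my_ncard_deg]; exact heven v
    obtain ⟨p, hp, hplen⟩ := my_exists_closed_trail hdeg hxy
    set G' := G.deleteEdges {e | e ∈ p.edges} with hG'
    have hG'adj : ∀ u w, G'.Adj u w ↔ G.Adj u w ∧ s(u,w) ∉ p.edges := by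
      intro u w; rw [hG', deleteEdges_adj]; rfl
    -- each dart's edge is in p.edges
    have hedges : p.edges = p.darts.map SimpleGraph.Dart.edge := rfl
    have hdartedge : ∀ d : G.Dart, d ∈ p.darts → d.edge ∈ p.edges := by
      intro d hd; rw [hedges]; exact List.mem_map_of_mem hd
    have hinj : ∀ d ∈ p.darts, ∀ d' ∈ p.darts, d.edge = d'.edge → d = d' := by
      have h := hp.edges_nodup
      rw [hedges] at h
      exact List.inj_on_of_nodup_map h
    have hedgemem : ∀ u w, s(u,w) ∈ p.edges ↔
        (∃ d ∈ p.darts, d.toProd = (u,w)) ∨ (∃ d ∈ p.darts, d.toProd = (w,u)) := by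
      intro u w
      constructor
      · intro h
        rw [hedges, List.mem_map] at h
        obtain ⟨d, hd, hde⟩ := h
        have : d.toProd = (u,w) ∨ d.toProd = (w,u) := by
          have : s(d.toProd.1, d.toProd.2) = s((u,w).1, (u,w).2) := hde
          rw [Sym2.mk_eq_mk_iff] at this
          rcases this with h | h
          · exact Or.inl h
          · exact Or.inr (by rw [h]; rfl)
        rcases this with h | h
        · exact Or.inl ⟨d, hd, h⟩
        · exact Or.inr ⟨d, hd, h⟩
      · rintro (⟨d, hd, hde⟩ | ⟨d, hd, hde⟩)
        · have : d.edge = s(u,w) := by rw [SimpleGraph.Dart.edge, hde]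
          exact this ▸ hdartedge d hd
        · have : d.edge = s(u,w) := by rw [SimpleGraph.Dart.edge, hde]; exact Sym2.eq_swap
          exact this ▸ hdartedge d hd
    have hnotboth : ∀ u w, (∃ d ∈ p.darts, d.toProd = (u,w)) →
        (∃ d ∈ p.darts, d.toProd = (w,u)) → False := by
      rintro u w ⟨d, hd, hde⟩ ⟨d', hd', hde'⟩
      have hne : d.edge = d'.edge := by
        rw [SimpleGraph.Dart.edge, SimpleGraph.Dart.edge, hde, hde']; exact Sym2.eq_swap
      have := hinj d hd d' hd' hne
      subst this
      rw [hde] at hde'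
      have h1 : u = w := (Prod.mk.injEq _ _ _ _ ▸ hde').1
      have had := d.adj
      rw [hde] at had
      exact G.irrefl (h1 ▸ had)
    -- even degrees in G'
    have hToutsub : ∀ v, {w | ∃ d ∈ p.darts, d.toProd = (v,w)} ⊆ G.neighborSet v := by
      rintro v w ⟨d, hd, hde⟩
      have had := d.adj; rw [hde] at had; exact had
    have hTinsub : ∀ v, {w | ∃ d ∈ p.darts, d.toProd = (w,v)} ⊆ G.neighborSet v := by
      rintro v w ⟨d, hd, hde⟩
      have had := d.adj; rw [hde] at had; exact had.symm
    have hTdisj : ∀ v, Disjoint {w | ∃ d ∈ p.darts, d.toProd = (v,w)}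
        {w | ∃ d ∈ p.darts, d.toProd = (w,v)} := by
      intro v
      rw [Set.disjoint_left]
      rintro w h1 h2
      exact hnotboth v w h1 h2
    have hG'deg : ∀ v, Even ((G'.neighborSet v).ncard) := by
      intro v
      have hset : G'.neighborSet v = G.neighborSet v \
          ({w | ∃ d ∈ p.darts, d.toProd = (v,w)} ∪ {w | ∃ d ∈ p.darts, d.toProd = (w,v)}) := by
        ext w
        simp only [mem_neighborSet, Set.mem_diff, Set.mem_union, Set.mem_setOf_eq]
        rw [hG'adj, hedgemem]
      rw [hset, Set.ncard_diff (Set.union_subset (hToutsub v) (hTinsub v))]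
      rw [Set.ncard_union_eq (hTdisj v), my_dartset_fst p hp v, my_dartset_snd p hp v,
        ← my_dart_count p v]
      have hle : ({w | ∃ d ∈ p.darts, d.toProd = (v,w)} ∪
          {w | ∃ d ∈ p.darts, d.toProd = (w,v)}).ncard ≤ (G.neighborSet v).ncard :=
        Set.ncard_le_ncard (Set.union_subset (hToutsub v) (hTinsub v)) (Set.toFinite _)
      rw [Set.ncard_union_eq (hTdisj v), my_dartset_fst p hp v, my_dartset_snd p hp v,
        ← my_dart_count p v] at hle
      obtain ⟨m, hm⟩ := heven v
      exact ⟨m - p.darts.countP (fun d => d.toProd.1 = v), by omega⟩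
    have hG'card : G'.edgeSet.ncard ≤ n := by
      have hsub : G'.edgeSet ⊆ G.edgeSet := edgeSet_mono (deleteEdges_le _)
      have hne : p.edges ≠ [] := by
        intro h
        have := p.length_edges
        rw [h] at this; simp at this; omega
      obtain ⟨e, he⟩ := List.exists_mem_of_ne_nil _ hne
      have heG : e ∈ G.edgeSet := p.edges_subset_edgeSet he
      have heG' : e ∉ G'.edgeSet := by
        rw [hG', edgeSet_deleteEdges]
        exact fun h => h.2 he
      have : G'.edgeSet.ncard < G.edgeSet.ncard :=
        Set.ncard_lt_ncard ⟨hsub, fun h => heG' (h heG)⟩ (Set.toFinite _)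
      omega
    obtain ⟨o', ho'sub, ho'anti, ho'bal⟩ := ih G' hG'deg hG'card
    have ho'np : ∀ u w, o' u w → s(u,w) ∉ p.edges := by
      intro u w h
      exact ((hG'adj u w).mp (ho'sub u w h)).2
    refine ⟨fun u w => (∃ d ∈ p.darts, d.toProd = (u,w)) ∨ o' u w, ?_, ?_, ?_⟩
    · rintro u w (⟨d, hd, hde⟩ | h)
      · have had := d.adj; rw [hde] at had; exact had
      · exact ((hG'adj u w).mp (ho'sub u w h)).1
    · intro u w huw
      constructor
      · rintro (h1 | h1) (h2 | h2)
        · exact hnotboth u w h1 h2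
        · exact ho'np w u h2 ((hedgemem w u).mpr (Or.inr h1))
        · exact ho'np u w h1 ((hedgemem u w).mpr (Or.inr h2))
        · exact ((ho'anti u w (ho'sub u w h1)).mp h1) h2
      · intro h
        by_cases hpe : s(u,w) ∈ p.edges
        · rcases (hedgemem u w).mp hpe with h1 | h1
          · exact Or.inl h1
          · exact absurd (Or.inl h1) h
        · exact Or.inr ((ho'anti u w ((hG'adj u w).mpr ⟨huw, hpe⟩)).mpr
            (fun h2 => h (Or.inr h2)))
    · intro v
      have hout : {u | (∃ d ∈ p.darts, d.toProd = (v,u)) ∨ o' v u}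
          = {u | ∃ d ∈ p.darts, d.toProd = (v,u)} ∪ {u | o' v u} := rfl
      have hin : {u | (∃ d ∈ p.darts, d.toProd = (u,v)) ∨ o' u v}
          = {u | ∃ d ∈ p.darts, d.toProd = (u,v)} ∪ {u | o' u v} := rfl
      have hd1 : Disjoint {u | ∃ d ∈ p.darts, d.toProd = (v,u)} {u | o' v u} := by
        rw [Set.disjoint_left]
        rintro u h1 h2
        exact ho'np v u h2 ((hedgemem v u).mpr (Or.inl h1))
      have hd2 : Disjoint {u | ∃ d ∈ p.darts, d.toProd = (u,v)} {u | o' u v} := by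
        rw [Set.disjoint_left]
        rintro u h1 h2
        exact ho'np u v h2 ((hedgemem u v).mpr (Or.inl h1))
      rw [hout, hin, Set.ncard_union_eq hd1, Set.ncard_union_eq hd2,
        my_dartset_fst p hp v, my_dartset_snd p hp v, my_dart_count p v, ho'bal v]


lemma my_two_factor (G : SimpleGraph V) (k : ℕ) (hk : 0 < k)
    (hreg : ∀ v : V, (G.neighborSet v).ncard = 2 * k) :
    ∃ F : SimpleGraph V, F ≤ G ∧ ∀ v : V, (F.neighborSet v).ncard = 2 := by
  classical
  obtain ⟨o, hsub, hanti, hbal⟩ := my_orient G.edgeSet.ncard G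
    (fun v => by rw [hreg v]; exact ⟨k, by ring⟩) le_rfl
  have hdisj : ∀ v, Disjoint {u | o v u} {u | o u v} := by
    intro v
    rw [Set.disjoint_left]
    rintro u h1 h2
    exact ((hanti v u (hsub v u h1)).mp h1) h2
  have huni : ∀ v, {u | o v u} ∪ {u | o u v} = G.neighborSet v := by
    intro v
    ext u
    simp only [Set.mem_union, Set.mem_setOf_eq, mem_neighborSet]
    constructor
    · rintro (h | h)
      · exact hsub v u h
      · exact (hsub u v h).symm
    · intro h
      by_cases h1 : o v u
      · exact Or.inl h1
      · exact Or.inr ((hanti v u h).not_left.mp h1)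
  have houtk : ∀ v, {u | o v u}.ncard = k := by
    intro v
    have h1 := Set.ncard_union_eq (hdisj v) (Set.toFinite _) (Set.toFinite _)
    rw [huni v, hreg v] at h1
    have h2 := hbal v
    omega
  have hink : ∀ v, {u | o u v}.ncard = k := fun v => by rw [← hbal v, houtk v]
  -- Hall condition
  set t : V → Finset V := fun v => (Set.toFinite {u | o v u}).toFinset with ht
  have htcard : ∀ v, (t v).card = k := by
    intro v; rw [ht, ← Set.ncard_eq_toFinset_card, houtk v]
  have hto : ∀ v u, u ∈ t v ↔ o v u := by
    intro v u; rw [ht]; simp [Set.Finite.mem_toFinset]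
  have hall : ∀ S : Finset V, S.card ≤ (S.biUnion t).card := by
    intro S
    set B := S.biUnion t with hB
    have h1 : ∀ v ∈ S, t v = B.filter (fun u => u ∈ t v) := by
      intro v hv
      ext u
      simp only [Finset.mem_filter]
      exact ⟨fun h => ⟨Finset.mem_biUnion.mpr ⟨v, hv, h⟩, h⟩, fun h => h.2⟩
    have h2 : k * S.card = ∑ v ∈ S, (t v).card := by
      rw [Finset.sum_congr rfl (fun v hv => htcard v), Finset.sum_const, smul_eq_mul]
      ring
    have h3 : ∑ v ∈ S, (t v).card = ∑ u ∈ B, (S.filter (fun v => u ∈ t v)).card := by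
      calc ∑ v ∈ S, (t v).card = ∑ v ∈ S, (B.filter (fun u => u ∈ t v)).card :=
            Finset.sum_congr rfl (fun v hv => by rw [← h1 v hv])
        _ = ∑ v ∈ S, ∑ u ∈ B, if u ∈ t v then 1 else 0 :=
            Finset.sum_congr rfl (fun v _ => Finset.card_filter _ _)
        _ = ∑ u ∈ B, ∑ v ∈ S, if u ∈ t v then 1 else 0 := Finset.sum_comm
        _ = ∑ u ∈ B, (S.filter (fun v => u ∈ t v)).card :=
            Finset.sum_congr rfl (fun u _ => (Finset.card_filter _ _).symm)
    have h4 : ∀ u, (S.filter (fun v => u ∈ t v)).card ≤ k := by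
      intro u
      have hsub2 : S.filter (fun v => u ∈ t v) ⊆ (Set.toFinite {v | o v u}).toFinset := by
        intro v hv
        rw [Set.Finite.mem_toFinset]
        exact (hto v u).mp (Finset.mem_filter.mp hv).2
      calc (S.filter (fun v => u ∈ t v)).card ≤ _ := Finset.card_le_card hsub2
        _ = k := by rw [← Set.ncard_eq_toFinset_card, hink u]
    have h5 : k * S.card ≤ k * B.card := by
      rw [h2, h3]
      calc ∑ u ∈ B, (S.filter (fun v => u ∈ t v)).card ≤ ∑ u ∈ B, k :=
            Finset.sum_le_sum (fun u _ => h4 u)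
        _ = k * B.card := by rw [Finset.sum_const, smul_eq_mul]; ring
    exact Nat.le_of_mul_le_mul_left h5 hk
  obtain ⟨f, hfinj, hft⟩ := (Finset.all_card_le_biUnion_card_iff_exists_injective t).mp hall
  have hfo : ∀ v, o v (f v) := fun v => (hto v (f v)).mp (hft v)
  have hfadj : ∀ v, G.Adj v (f v) := fun v => hsub v (f v) (hfo v)
  have hfbij : Function.Bijective f := (Finite.injective_iff_bijective).mp hfinj
  set e : V ≃ V := Equiv.ofBijective f hfbij with he
  have hfe : ∀ v, f (e.symm v) = v := fun v => e.apply_symm_apply v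
  have hfg : ∀ v, f v ≠ e.symm v := by
    intro v hcon
    have h1 : o v (f v) := hfo v
    have h2 : o (f v) v := by
      have := hfo (f v)
      rwa [show f (f v) = v from by rw [hcon] at this ⊢; exact hfe v] at this
    exact ((hanti v (f v) (hfadj v)).mp h1) h2
  refine ⟨SimpleGraph.fromRel (fun x y => f x = y), ?_, ?_⟩
  · intro x y hxy
    rw [fromRel_adj] at hxy
    rcases hxy.2 with h | h
    · exact h ▸ hfadj x
    · exact (h ▸ hfadj y).symm
  · intro v
    have hset : (SimpleGraph.fromRel (fun x y => f x = y)).neighborSet v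
        = {f v, e.symm v} := by
      ext u
      simp only [mem_neighborSet, fromRel_adj, Set.mem_insert_iff, Set.mem_singleton_iff]
      constructor
      · rintro ⟨hne, h | h⟩
        · exact Or.inl h.symm
        · refine Or.inr ?_
          have : e u = e (e.symm v) := by
            rw [e.apply_symm_apply]
            exact h
          exact e.injective this |>.symm ▸ rfl
      · rintro (rfl | rfl)
        · exact ⟨(hfadj v).ne, Or.inl rfl⟩
        · refine ⟨?_, Or.inr (hfe v)⟩
          intro hcon
          have := hfadj (e.symm v)
          rw [hfe v, ← hcon] at this
          exact G.irrefl this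
    rw [hset, Set.ncard_pair (hfg v)]

lemma my_main (k : ℕ) : ∀ (G : SimpleGraph V),
    (∀ v : V, (G.neighborSet v).ncard = 2 * k) →
    ∃ H : Fin k → SimpleGraph V,
      (∀ i, H i ≤ G) ∧
      (∀ i, ∀ v : V, ((H i).neighborSet v).ncard = 2) ∧
      Pairwise (fun i j => Disjoint (H i) (H j)) ∧
      (⨆ i, H i) = G := by
  induction k with
  | zero =>
    intro G hreg
    refine ⟨fun i => i.elim0, fun i => i.elim0, fun i => i.elim0, ?_, ?_⟩
    · intro i j _
      exact i.elim0
    have hbot : G = ⊥ := by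
      ext x y
      simp only [bot_adj, iff_false]
      intro h
      have : 0 < (G.neighborSet x).ncard :=
        Set.ncard_pos (Set.toFinite _) |>.mpr ⟨y, h⟩
      rw [hreg x] at this
      omega
    rw [hbot, iSup_of_empty]
  | succ k ih =>
    intro G hreg
    obtain ⟨F, hFle, hFdeg⟩ := my_two_factor G (k+1) (Nat.succ_pos k) hreg
    set G' := G \ F with hG'
    have hG'deg : ∀ v : V, (G'.neighborSet v).ncard = 2 * k := by
      intro v
      have hsub : F.neighborSet v ⊆ G.neighborSet v := fun u h => hFle h
      have hset : G'.neighborSet v = G.neighborSet v \ F.neighborSet v := by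
        ext u
        simp only [mem_neighborSet, Set.mem_diff, hG', sdiff_adj]
      rw [hset, Set.ncard_diff hsub (Set.toFinite _), hreg v, hFdeg v]
      omega
    obtain ⟨H', hH'le, hH'deg, hH'pair, hH'sup⟩ := ih G' hG'deg
    have hH'leF : ∀ i, Disjoint F (H' i) := by
      intro i
      exact (disjoint_sdiff_self_right (x := F) (y := G)).mono_right (hG' ▸ hH'le i)
    refine ⟨Fin.cons F H', ?_, ?_, ?_, ?_⟩
    · intro i
      induction i using Fin.cases with
      | zero => simpa using hFle
      | succ j => simpa using le_trans (hH'le j) (sdiff_le)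
    · intro i
      induction i using Fin.cases with
      | zero => simpa using hFdeg
      | succ j => simpa using hH'deg j
    · have key : ∀ i j : Fin (k+1), i ≠ j →
          Disjoint ((Fin.cons F H' : Fin (k+1) → SimpleGraph V) i)
            ((Fin.cons F H' : Fin (k+1) → SimpleGraph V) j) := by
        intro i
        induction i using Fin.cases with
        | zero =>
          intro j
          induction j using Fin.cases with
          | zero => intro h; exact absurd rfl h
          | succ j' => intro _; simpa using hH'leF j'
        | succ i' =>
          intro j
          induction j using Fin.cases with
          | zero => intro _; simpa using (hH'leF i').symm
          | succ j' =>
            intro hne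
            have : i' ≠ j' := fun h => hne (by rw [h])
            simpa using hH'pair this
      intro i j hij
      exact key i j hij
    · have hsup : (⨆ i, (Fin.cons F H' : Fin (k+1) → SimpleGraph V) i) = F ⊔ ⨆ i, H' i := by
        apply le_antisymm
        · refine iSup_le ?_
          intro i
          induction i using Fin.cases with
          | zero => simp
          | succ j => simpa using le_trans (le_iSup H' j) le_sup_right
        · refine sup_le ?_ (iSup_le ?_)
          · exact le_iSup_of_le 0 (by simp)
          · intro j
            exact le_iSup_of_le j.succ (by simp)
      rw [hsup, hH'sup, hG', sup_sdiff_cancel_right hFle]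


end MyAux

/-- Petersen: every `2k`-regular graph decomposes into `k` edge-disjoint
2-factors. -/
theorem petersen_two_factorable {V : Type} [Fintype V] (G : SimpleGraph V) (k : ℕ)
    (hreg : ∀ v : V, (G.neighborSet v).ncard = 2 * k) :
    ∃ H : Fin k → SimpleGraph V,
      (∀ i, H i ≤ G) ∧
      (∀ i, ∀ v : V, ((H i).neighborSet v).ncard = 2) ∧
      Pairwise (fun i j => Disjoint (H i) (H j)) ∧
      (⨆ i, H i) = G := by
  classical
  exact my_main k G hreg
end

section
/- Let F be a graph with F → (K_{1,n}, ⊔_{j=1}^t K_{1,m_j}) where n ≥ 2, and let M be a maximum matching of F. Then the graph F∖M obtained by deleting the edges of M satisfies (F∖M) → (K_{1,n−1}, ⊔_{j=1}^t K_{1,m_j}). -/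
open SimpleGraph

/-- if `F → (K_{1,n}, ⊔ⱼ K_{1,mⱼ})` with `n ≥ 2` and `M` is a maximum
matching of `F`, then `F \ M → (K_{1,n-1}, ⊔ⱼ K_{1,mⱼ})`. -/
theorem deleteMatching_arrows {V : Type} [Fintype V] (F : SimpleGraph V) (n t : ℕ)
    (hn : 2 ≤ n) (m : Fin t → ℕ)
    (h : Arrows F (starG n) (starForest t m))
    (M : F.Subgraph) (hM : M.IsMatching)
    (hmax : ∀ M' : F.Subgraph, M'.IsMatching → M'.edgeSet.ncard ≤ M.edgeSet.ncard) :
    Arrows (F.deleteEdges M.edgeSet) (starG (n - 1)) (starForest t m) := by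
  classical
  obtain ⟨k, rfl⟩ : ∃ k, n = k + 1 := ⟨n - 1, by omega⟩
  show Arrows (F.deleteEdges M.edgeSet) (starG k) (starForest t m)
  intro c
  set c' : Sym2 V → Bool := fun s => if s ∈ M.edgeSet then true else c s with hc'
  rcases h c' with ⟨f, hf⟩ | ⟨f, hf⟩
  · left
    have huniq : ∀ i₁ i₂ : Fin (k + 2), s(f 0, f i₁) ∈ M.edgeSet →
        s(f 0, f i₂) ∈ M.edgeSet → i₁ = i₂ := by
      intro i₁ i₂ h1 h2
      rw [Subgraph.mem_edgeSet] at h1 h2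
      obtain ⟨w, hw, hwu⟩ := hM (M.edge_vert h1)
      exact f.injective ((hwu _ h1).trans (hwu _ h2).symm)
    obtain ⟨j, hj0, hj⟩ : ∃ j : Fin (k + 2), j ≠ 0 ∧
        ∀ i : Fin (k + 2), i ≠ 0 → i ≠ j → s(f 0, f i) ∉ M.edgeSet := by
      by_cases hex : ∃ i : Fin (k + 2), i ≠ 0 ∧ s(f 0, f i) ∈ M.edgeSet
      · obtain ⟨j, hj0, hjM⟩ := hex
        exact ⟨j, hj0, fun i hi0 hij hmem => hij (huniq i j hmem hjM)⟩
      · exact ⟨1, one_ne_zero, fun i hi0 _ hmem => hex ⟨i, hi0, hmem⟩⟩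
    have hg0 : (Fin.succAboveEmb j) 0 = 0 := Fin.succAbove_ne_zero_zero hj0
    have key : ∀ i : Fin (k + 1), i ≠ 0 →
        (colorSub (F.deleteEdges M.edgeSet) c true).Adj
          (f ((Fin.succAboveEmb j) 0)) (f ((Fin.succAboveEmb j) i)) := by
      intro i hi0
      have hne : (Fin.succAboveEmb j) i ≠ 0 := by
        rw [← hg0]; exact fun hh => hi0 ((Fin.succAboveEmb j).injective hh)
      have hnej : (Fin.succAboveEmb j) i ≠ j := Fin.succAbove_ne j i
      have hadj : (starG (k + 1)).Adj ((Fin.succAboveEmb j) 0) ((Fin.succAboveEmb j) i) := by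
        refine ⟨fun hh => hi0 ((Fin.succAboveEmb j).injective hh).symm, Or.inl hg0⟩
      obtain ⟨hF, hcol⟩ := hf hadj
      rw [hg0] at hF hcol ⊢
      have hnm : s(f 0, f ((Fin.succAboveEmb j) i)) ∉ M.edgeSet := hj _ hne hnej
      refine ⟨deleteEdges_adj.mpr ⟨hF, hnm⟩, ?_⟩
      simp only [hc', if_neg hnm] at hcol
      exact hcol
    refine ⟨(Fin.succAboveEmb j).trans f, ?_⟩
    rintro a b ⟨hab, h0 | h0⟩
    · subst h0
      exact key b (fun hh => hab hh.symm)
    · subst h0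
      exact (key a hab).symm
  · right
    refine ⟨f, ?_⟩
    intro a b hab
    obtain ⟨hF, hcol⟩ := hf hab
    by_cases hm : s(f a, f b) ∈ M.edgeSet
    · simp [hc', hm] at hcol
    · refine ⟨deleteEdges_adj.mpr ⟨hF, hm⟩, ?_⟩
      simp only [hc', if_neg hm] at hcol
      exact hcol
end

section
/- Let n_1 ≥ ... ≥ n_s and m_1 ≥ ... ≥ m_t be positive integers, and set l_k = max{n_i + m_j − 1 : i + j = k} for 2 ≤ k ≤ s+t. Then the star forest F = ⊔_{k=2}^{s+t} K_{1,l_k} satisfies F → (⊔_{i=1}^s K_{1,n_i}, ⊔_{j=1}^t K_{1,m_j}); in particular r̂(⊔ K_{1,n_i}, ⊔ K_{1,m_j}) ≤ Σ_{k=2}^{s+t} l_k. -/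
open SimpleGraph

/-! ### Auxiliary material -/

/-- The number of leaves of color `b` in component `k` of the host star forest. -/
def degB {T : ℕ} (L : Fin T → ℕ) (c : Sym2 (Σ k : Fin T, Fin (L k + 1)) → Bool)
    (b : Bool) (k : Fin T) : ℕ :=
  ((Finset.univ.filter (fun a : Fin (L k + 1) => a.val ≠ 0)).filter
    (fun a => c s(⟨k, 0⟩, ⟨k, a⟩) = b)).card

lemma degB_add {T : ℕ} (L : Fin T → ℕ) (c : Sym2 (Σ k : Fin T, Fin (L k + 1)) → Bool)
    (k : Fin T) : degB L c true k + degB L c false k = L k := by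
  classical
  have h1 : (Finset.univ.filter (fun a : Fin (L k + 1) => a.val ≠ 0)).card = L k := by
    have : (Finset.univ.filter (fun a : Fin (L k + 1) => a.val ≠ 0)) =
        Finset.univ.erase 0 := by
      ext a
      simp only [Finset.mem_filter, Finset.mem_univ, true_and, Finset.mem_erase, and_true,
        ne_eq, Fin.ext_iff, Fin.val_zero]
    rw [this, Finset.card_erase_of_mem (Finset.mem_univ _), Finset.card_univ,
      Fintype.card_fin]
    omega
  have h2 := Finset.card_filter_add_card_filter_not
    (s := Finset.univ.filter (fun a : Fin (L k + 1) => a.val ≠ 0))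
    (p := fun a => c s(⟨k, 0⟩, ⟨k, a⟩) = true)
  have h3 : ((Finset.univ.filter (fun a : Fin (L k + 1) => a.val ≠ 0)).filter
      (fun a => ¬ c s(⟨k, 0⟩, ⟨k, a⟩) = true)) =
      ((Finset.univ.filter (fun a : Fin (L k + 1) => a.val ≠ 0)).filter
      (fun a => c s(⟨k, 0⟩, ⟨k, a⟩) = false)) := by
    apply Finset.filter_congr
    intro a _
    simp
  rw [h3] at h2
  rw [degB, degB, h2, h1]

/-- The embedding used in the containment lemma. -/
def auxEmb {T s' : ℕ} (L : Fin T → ℕ) (n' : Fin s' → ℕ) (σ : Fin s' → Fin T)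
    (e : ∀ i : Fin s', Fin (n' i) → Fin (L (σ i) + 1)) :
    (Σ i : Fin s', Fin (n' i + 1)) → Σ k : Fin T, Fin (L k + 1) := fun x =>
  ⟨σ x.1, if hx : x.2.val = 0 then 0
    else e x.1 ⟨x.2.val - 1, by have := x.2.isLt; omega⟩⟩

lemma contains_of_inj {T s' : ℕ} (L : Fin T → ℕ) (n' : Fin s' → ℕ)
    (c : Sym2 (Σ k : Fin T, Fin (L k + 1)) → Bool) (b : Bool)
    (σ : Fin s' → Fin T) (hσ : Function.Injective σ)
    (hdeg : ∀ i, n' i ≤ degB L c b (σ i)) :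
    Contains (colorSub (starForest T L) c b) (starForest s' n') := by
  classical
  have hch : ∀ i : Fin s', ∃ F : Finset (Fin (L (σ i) + 1)),
      F ⊆ (Finset.univ.filter (fun a : Fin (L (σ i) + 1) => a.val ≠ 0)).filter
        (fun a => c s(⟨σ i, 0⟩, ⟨σ i, a⟩) = b) ∧ F.card = n' i := fun i =>
    Finset.exists_subset_card_eq (hdeg i)
  choose F hFsub hFcard using hch
  let e : ∀ i : Fin s', Fin (n' i) → Fin (L (σ i) + 1) := fun i a =>
    ((F i).orderIsoOfFin (hFcard i) a : Fin (L (σ i) + 1))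
  have he_mem : ∀ i a, e i a ∈ F i := fun i a => ((F i).orderIsoOfFin (hFcard i) a).2
  have he_prop : ∀ i a, (e i a).val ≠ 0 ∧ c s(⟨σ i, 0⟩, ⟨σ i, e i a⟩) = b := by
    intro i a
    have := hFsub i (he_mem i a)
    simp only [Finset.mem_filter, Finset.mem_univ, true_and] at this
    exact this
  have he_inj : ∀ i, Function.Injective (e i) := by
    intro i x y h
    exact ((F i).orderIsoOfFin (hFcard i)).injective (Subtype.coe_injective h)
  have hginj : Function.Injective (auxEmb L n' σ e) := by
    rintro ⟨i, a⟩ ⟨i', a'⟩ hg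
    simp only [auxEmb, Sigma.mk.inj_iff] at hg
    obtain ⟨h1, h2⟩ := hg
    have hii : i = i' := hσ h1
    subst hii
    have h2' := eq_of_heq h2
    have haa : a = a' := by
      split_ifs at h2' with ha ha'
      · exact Fin.ext (by omega)
      · exact absurd (congrArg Fin.val h2').symm (he_prop i _).1
      · exact absurd (congrArg Fin.val h2') (he_prop i _).1
      · rename_i ha'
        have := he_inj i h2'
        have := congrArg Fin.val this
        simp only at this
        exact Fin.ext (by omega)
    rw [haa]
  refine ⟨⟨auxEmb L n' σ e, hginj⟩, ?_⟩
  rintro ⟨i, a⟩ ⟨i', a'⟩ (⟨(h1 : i = i'), h2, h3⟩ : i = i' ∧ a.val ≠ a'.val ∧ (a.val = 0 ∨ a'.val = 0))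
  subst h1
  simp only [Function.Embedding.coeFn_mk, auxEmb]
  rcases h3 with h0 | h0
  · have hA' : a'.val ≠ 0 := by
      intro hcon; exact h2 (h0.trans hcon.symm)
    rw [dif_pos h0, dif_neg hA']
    refine ⟨⟨rfl, ?_, Or.inl rfl⟩, (he_prop i _).2⟩
    exact fun hcon => (he_prop i ⟨a'.val - 1, by have := a'.isLt; omega⟩).1 hcon.symm
  · have hA : a.val ≠ 0 := by
      intro hcon; exact h2 (hcon.trans h0.symm)
    rw [dif_pos h0, dif_neg hA]
    refine ⟨⟨rfl, ?_, Or.inr rfl⟩, ?_⟩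
    · exact fun hcon => (he_prop i ⟨a.val - 1, by have := a.isLt; omega⟩).1 hcon
    · rw [Sym2.eq_swap]
      exact (he_prop i _).2

lemma exists_inj_of_card {T s' : ℕ} (n' : Fin s' → ℕ) (hna : Antitone n') (d : Fin T → ℕ)
    (h : ∀ i : Fin s', i.val + 1 ≤ (Finset.univ.filter fun k => n' i ≤ d k).card) :
    ∃ σ : Fin s' → Fin T, Function.Injective σ ∧ ∀ i, n' i ≤ d (σ i) := by
  classical
  have hall : ∀ S : Finset (Fin s'),
      S.card ≤ (S.biUnion (fun i : Fin s' => Finset.univ.filter fun k => n' i ≤ d k)).card := by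
    intro S
    rcases S.eq_empty_or_nonempty with rfl | hS
    · simp
    · set i₀ := S.max' hS with hi₀
      have hsub : (Finset.univ.filter fun k => n' i₀ ≤ d k) ⊆
          S.biUnion (fun i : Fin s' => Finset.univ.filter fun k => n' i ≤ d k) := by
        rw [hi₀]
        exact Finset.subset_biUnion_of_mem (fun i : Fin s' => Finset.univ.filter fun k => n' i ≤ d k) (S.max'_mem hS)
      have hS1 : S ⊆ Finset.Iic i₀ := fun x hx => Finset.mem_Iic.mpr (S.le_max' x hx)
      calc S.card ≤ (Finset.Iic i₀).card := Finset.card_le_card hS1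
        _ = i₀.val + 1 := Fin.card_Iic i₀
        _ ≤ (Finset.univ.filter fun k => n' i₀ ≤ d k).card := h i₀
        _ ≤ _ := Finset.card_le_card hsub
  obtain ⟨f, hfinj, hfmem⟩ := (Finset.all_card_le_biUnion_card_iff_exists_injective
    (fun i : Fin s' => Finset.univ.filter fun k => n' i ≤ d k)).mp hall
  exact ⟨f, hfinj, fun i => (Finset.mem_filter.mp (hfmem i)).2⟩

lemma card_val_ne_zero (N : ℕ) :
    (Finset.univ.filter (fun a : Fin (N + 1) => a.val ≠ 0)).card = N := by
  have h : (Finset.univ.filter (fun a : Fin (N + 1) => a.val ≠ 0)) =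
      Finset.univ.erase 0 := by
    ext a
    simp only [Finset.mem_filter, Finset.mem_univ, true_and, Finset.mem_erase, and_true,
      ne_eq, Fin.ext_iff, Fin.val_zero]
  rw [h, Finset.card_erase_of_mem (Finset.mem_univ _), Finset.card_univ, Fintype.card_fin]
  omega

lemma edge_count {T : ℕ} (L : Fin T → ℕ) :
    (starForest T L).edgeSet.ncard ≤ ∑ k : Fin T, L k := by
  classical
  set S : Set (Σ k : Fin T, Fin (L k + 1)) := {v | v.2.val ≠ 0} with hS
  have hsub : (starForest T L).edgeSet ⊆
      (fun v : Σ k : Fin T, Fin (L k + 1) => s(⟨v.1, 0⟩, v)) '' S := by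
    intro e he
    induction e using Sym2.ind with
    | _ x y =>
      rw [SimpleGraph.mem_edgeSet] at he
      obtain ⟨h1, h2, h3⟩ : x.1 = y.1 ∧ x.2.val ≠ y.2.val ∧ (x.2.val = 0 ∨ y.2.val = 0) := he
      rcases h3 with h0 | h0
      · refine ⟨y, by show y.2.val ≠ 0; omega, ?_⟩
        have hx : x = ⟨y.1, (0 : Fin (L y.1 + 1))⟩ := by
          obtain ⟨x1, x2⟩ := x
          simp only at h1 h0
          subst h1
          simp only [Sigma.mk.inj_iff, heq_eq_eq, true_and]
          exact Fin.ext h0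
        rw [hx]
      · refine ⟨x, by show x.2.val ≠ 0; omega, ?_⟩
        have hy : y = ⟨x.1, (0 : Fin (L x.1 + 1))⟩ := by
          obtain ⟨y1, y2⟩ := y
          simp only at h1 h0
          subst h1
          simp only [Sigma.mk.inj_iff, heq_eq_eq, true_and]
          exact Fin.ext h0
        rw [hy, Sym2.eq_swap]
  have hC : S.ncard = ∑ k : Fin T, L k := by
    have h1 : S.ncard = Fintype.card {v : Σ k : Fin T, Fin (L k + 1) // v.2.val ≠ 0} := by
      rw [← Nat.card_coe_set_eq, Nat.card_eq_fintype_card]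
      exact Fintype.card_congr (Equiv.subtypeEquivRight fun v => Iff.rfl)
    have eqv : {v : Σ k : Fin T, Fin (L k + 1) // v.2.val ≠ 0} ≃
        Σ k : Fin T, {a : Fin (L k + 1) // a.val ≠ 0} :=
      ⟨fun x => ⟨x.1.1, ⟨x.1.2, x.2⟩⟩, fun y => ⟨⟨y.1, y.2.1⟩, y.2.2⟩,
        fun x => rfl, fun y => rfl⟩
    rw [h1, Fintype.card_congr eqv, Fintype.card_sigma]
    congr 1
    funext k
    rw [Fintype.card_subtype]
    exact card_val_ne_zero (L k)
  calc (starForest T L).edgeSet.ncard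
      ≤ ((fun v : Σ k : Fin T, Fin (L k + 1) => s(⟨v.1, 0⟩, v)) '' S).ncard :=
        Set.ncard_le_ncard hsub (Set.toFinite _)
    _ ≤ S.ncard := Set.ncard_image_le S.toFinite
    _ = _ := hC

/-- the star forest `⊔_{k=2}^{s+t} K_{1,l_k}` arrows
`(⊔ᵢ K_{1,nᵢ}, ⊔ⱼ K_{1,mⱼ})`, where `l_k = max {nᵢ + mⱼ - 1 : i + j = k}`; in particular
`r̂ ≤ Σ_{k=2}^{s+t} l_k`. -/
theorem starForest_arrows_and_upper_bound (s t : ℕ) (hs : 0 < s) (ht : 0 < t)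
    (n : Fin s → ℕ) (m : Fin t → ℕ) (hna : Antitone n) (hma : Antitone m)
    (hn1 : ∀ i, 1 ≤ n i) (hm1 : ∀ j, 1 ≤ m j) :
    Arrows (starForest (s + t - 1)
        (fun k => (Finset.univ.filter
            (fun p : Fin s × Fin t => (p.1.val + 1) + (p.2.val + 1) = k.val + 2)).sup
          (fun p => n p.1 + m p.2 - 1)))
      (starForest s n) (starForest t m) ∧
    sizeRamsey (starForest s n) (starForest t m) ≤
      ∑ k ∈ Finset.Icc 2 (s + t),
        (Finset.univ.filter
            (fun p : Fin s × Fin t => (p.1.val + 1) + (p.2.val + 1) = k)).sup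
          (fun p => n p.1 + m p.2 - 1) := by
  classical
  set T := s + t - 1 with hT
  set L : Fin T → ℕ := fun k => (Finset.univ.filter
      (fun p : Fin s × Fin t => (p.1.val + 1) + (p.2.val + 1) = k.val + 2)).sup
    (fun p => n p.1 + m p.2 - 1) with hL
  -- lower bound on L
  have hLlb : ∀ (i : Fin s) (j : Fin t) (k : Fin T), k.val ≤ i.val + j.val →
      n i + m j ≤ L k + 1 := by
    intro i j k hk
    have hjt : min j.val k.val < t := lt_of_le_of_lt (min_le_left _ _) j.isLt
    have his : k.val - min j.val k.val < s := by
      have h1 := i.isLt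
      omega
    set j' : Fin t := ⟨min j.val k.val, hjt⟩ with hj'
    set i' : Fin s := ⟨k.val - min j.val k.val, his⟩ with hi'
    have hmem : (i', j') ∈ Finset.univ.filter
        (fun p : Fin s × Fin t => (p.1.val + 1) + (p.2.val + 1) = k.val + 2) := by
      simp only [Finset.mem_filter, Finset.mem_univ, true_and, hi', hj']
      omega
    have h1 : n i' + m j' - 1 ≤ L k := by
      have := Finset.le_sup (f := fun p : Fin s × Fin t => n p.1 + m p.2 - 1) hmem
      simpa [hL] using this
    have h2 : n i ≤ n i' := hna (by rw [hi']; exact Fin.mk_le_of_le_val (by omega))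
    have h3 : m j ≤ m j' := hma (by rw [hj']; exact Fin.mk_le_of_le_val (by omega))
    have h4 : 1 ≤ n i' := hn1 i'
    have h5 : 1 ≤ m j' := hm1 j'
    omega
  have harr : Arrows (starForest T L) (starForest s n) (starForest t m) := by
    intro c
    by_cases hred : ∀ i : Fin s, i.val + 1 ≤
        (Finset.univ.filter fun k : Fin T => n i ≤ degB L c true k).card
    · obtain ⟨σ, hσ, hσd⟩ := exists_inj_of_card n hna (degB L c true) hred
      exact Or.inl (contains_of_inj L n c true σ hσ hσd)
    · push_neg at hred
      obtain ⟨i, hi⟩ := hred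
      have hblue : ∀ j : Fin t, j.val + 1 ≤
          (Finset.univ.filter fun k : Fin T => m j ≤ degB L c false k).card := by
        intro j
        have hij1 : i.val + j.val + 1 ≤ T := by
          have := i.isLt; have := j.isLt; omega
        set B : Finset (Fin T) := Finset.univ.filter (fun k => k.val ≤ i.val + j.val)
          with hB
        have hBcard : B.card = i.val + j.val + 1 := by
          have hBeq : B = Finset.Iic (⟨i.val + j.val, by omega⟩ : Fin T) := by
            ext k
            simp [hB, Fin.le_def]
          rw [hBeq, Fin.card_Iic _]
        have hsub : B \ (Finset.univ.filter fun k : Fin T => n i ≤ degB L c true k) ⊆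
            Finset.univ.filter (fun k : Fin T => m j ≤ degB L c false k) := by
          intro k hk
          simp only [hB, Finset.mem_sdiff, Finset.mem_filter, Finset.mem_univ, true_and,
            not_le] at hk ⊢
          obtain ⟨hk1, hk2⟩ := hk
          have hd := degB_add L c k
          have hlb := hLlb i j k hk1
          have := hn1 i
          have := hm1 j
          omega
        have hle := Finset.le_card_sdiff
          (Finset.univ.filter fun k : Fin T => n i ≤ degB L c true k) B
        have hle2 := Finset.card_le_card hsub
        omega
      obtain ⟨σ, hσ, hσd⟩ := exists_inj_of_card m hma (degB L c false) hblue
      exact Or.inr (contains_of_inj L m c false σ hσ hσd)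
  refine ⟨harr, ?_⟩
  have h1 : sizeRamsey (starForest s n) (starForest t m) ≤ (starForest T L).edgeSet.ncard :=
    Nat.sInf_le ⟨Σ k : Fin T, Fin (L k + 1), inferInstance, starForest T L, rfl, harr⟩
  have h2 := edge_count L
  have h3 : ∑ k : Fin T, L k = ∑ k ∈ Finset.Icc 2 (s + t),
      (Finset.univ.filter
          (fun p : Fin s × Fin t => (p.1.val + 1) + (p.2.val + 1) = k)).sup
        (fun p => n p.1 + m p.2 - 1) := by
    have hstep : ∑ k : Fin T, L k = ∑ k : Fin T,
        (fun r : ℕ => (Finset.univ.filter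
            (fun p : Fin s × Fin t => (p.1.val + 1) + (p.2.val + 1) = r + 2)).sup
          (fun p => n p.1 + m p.2 - 1)) k.val :=
      Finset.sum_congr rfl (fun k _ => by simp only [hL])
    rw [hstep, Fin.sum_univ_eq_sum_range (fun r : ℕ => (Finset.univ.filter
            (fun p : Fin s × Fin t => (p.1.val + 1) + (p.2.val + 1) = r + 2)).sup
          (fun p => n p.1 + m p.2 - 1)) T]
    refine Finset.sum_nbij' (i := fun r => r + 2) (j := fun k => k - 2) ?_ ?_ ?_ ?_ ?_
    · intro r hr
      simp only [Finset.mem_range] at hr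
      simp only [Finset.mem_Icc]
      omega
    · intro k hk
      simp only [Finset.mem_Icc] at hk
      simp only [Finset.mem_range]
      omega
    · intro r _; omega
    · intro k hk
      simp only [Finset.mem_Icc] at hk
      omega
    · intro r _
      rfl
  omega
end
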